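/- arXiv:1705.08574 — 14 statements merged into one kernel-verified Lean document; each statement's English description precedes it below -/
import Mathlib

section
/- For any proper subdomain D of ℝⁿ and points x, y ∈ D, one has 2·j_D(x,y) ≤ u_D(x,y) ≤ 4·j_D(x,y), with equality in the first inequality when d(x) = d(y). -/
open Metric Real

lemma key_aux (a b t : ℝ) (ha : 0 < a) (hb : 0 < b) (ht : 0 ≤ t)
    (hab : a ≤ b + t) (hba : b ≤ a + t) :
    Real.log ((1 + t / a) * (1 + t / b)) ≤ 2 * Real.log ((t + max a b) / Real.sqrt (a * b)) ∧
    2 * Real.log ((t + max a b) / Real.sqrt (a * b)) ≤ 2 * Real.log ((1 + t / a) * (1 + t / b)) ∧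
    (a = b → 2 * Real.log ((t + max a b) / Real.sqrt (a * b)) =
      Real.log ((1 + t / a) * (1 + t / b))) := by
  have hab' : 0 < a * b := mul_pos ha hb
  have hM : 0 < max a b := lt_max_of_lt_left ha
  have htM : 0 < t + max a b := by positivity
  have hsq : Real.sqrt (a * b) > 0 := Real.sqrt_pos.2 hab'
  have h1 : (1 + t / a) * (1 + t / b) = (a + t) * (b + t) / (a * b) := by
    field_simp
  have h2 : 2 * Real.log ((t + max a b) / Real.sqrt (a * b)) =
      Real.log ((t + max a b) ^ 2 / (a * b)) := by
    rw [two_mul, ← Real.log_mul (by positivity) (by positivity)]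
    congr 1
    rw [div_mul_div_comm, Real.mul_self_sqrt hab'.le, sq]
  have hpos1 : 0 < (a + t) * (b + t) / (a * b) := by positivity
  have hpos2 : 0 < (t + max a b) ^ 2 / (a * b) := by positivity
  have hle1 : (a + t) * (b + t) ≤ (t + max a b) ^ 2 := by
    have h3 : a + t ≤ t + max a b := by linarith [le_max_left a b]
    have h4 : b + t ≤ t + max a b := by linarith [le_max_right a b]
    nlinarith
  have hle2 : (t + max a b) ^ 2 * (a * b) ≤ ((a + t) * (b + t)) ^ 2 := by
    rcases max_cases a b with ⟨hM1, hM2⟩ | ⟨hM1, hM2⟩ <;> rw [hM1]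
    · calc (t + a) ^ 2 * (a * b) ≤ (t + a) ^ 2 * ((b + t) * b) :=
          mul_le_mul_of_nonneg_left (by nlinarith) (by positivity)
        _ ≤ ((a + t) * (b + t)) ^ 2 := by nlinarith
    · calc (t + b) ^ 2 * (a * b) ≤ (t + b) ^ 2 * (a * (a + t)) :=
          mul_le_mul_of_nonneg_left (by nlinarith) (by positivity)
        _ ≤ ((a + t) * (b + t)) ^ 2 := by nlinarith
  refine ⟨?_, ?_, ?_⟩
  · rw [h1, h2]
    exact Real.log_le_log hpos1 (by gcongr)
  · rw [h1, h2]
    have : Real.log ((t + max a b) ^ 2 / (a * b)) ≤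
        Real.log (((a + t) * (b + t) / (a * b)) ^ 2) := by
      apply Real.log_le_log hpos2
      rw [div_pow]
      rw [div_le_div_iff₀ hab' (by positivity)]
      calc (t + max a b) ^ 2 * (a*b)^2 = ((t + max a b) ^ 2 * (a*b)) * (a*b) := by ring
        _ ≤ ((a + t) * (b + t)) ^ 2 * (a * b) := by nlinarith
    rw [Real.log_pow] at this
    push_cast at this
    linarith
  · intro hEq
    subst hEq
    rw [h1, h2, max_self]
    congr 1
    rw [div_eq_div_iff (by positivity) hab'.ne']
    ring

/-- For a proper subdomain `D ⊊ ℝⁿ` with `d(x) = dist(x, ∂D)`,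
`j_D(x,y) = (1/2)·log((1 + |x−y|/d(x))(1 + |x−y|/d(y)))` and
`u_D(x,y) = 2·log((|x−y| + max{d(x),d(y)})/√(d(x)d(y)))`, one has
`2 j_D ≤ u_D ≤ 4 j_D`, with equality on the left when `d(x) = d(y)`. -/
theorem stmt0 {n : ℕ} (D : Set (EuclideanSpace ℝ (Fin n)))
    (hDopen : IsOpen D) (hDconn : IsConnected D) (hDproper : D ≠ Set.univ)
    (d j u : _)
    (hd : d = fun x => Metric.infDist x (frontier D))
    (hj : j = fun x y => (1/2) * Real.log ((1 + dist x y / d x) * (1 + dist x y / d y)))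
    (hu : u = fun x y => 2 * Real.log ((dist x y + max (d x) (d y)) / Real.sqrt (d x * d y)))
    (x y : EuclideanSpace ℝ (Fin n)) (hx : x ∈ D) (hy : y ∈ D) :
    2 * j x y ≤ u x y ∧ u x y ≤ 4 * j x y ∧ (d x = d y → u x y = 2 * j x y) := by
  have hfr : (frontier D).Nonempty := by
    rw [Set.nonempty_iff_ne_empty]
    intro h
    rcases isClopen_iff.1 (isClopen_iff_frontier_eq_empty.2 h) with h' | h'
    · exact hDconn.nonempty.ne_empty h'
    · exact hDproper h'
  have hdpos : ∀ z ∈ D, 0 < d z := by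
    intro z hz
    rw [hd]
    refine (isClosed_frontier.notMem_iff_infDist_pos hfr).1 ?_
    intro hmem
    exact hmem.2 (by rwa [hDopen.interior_eq])
  have ha := hdpos x hx
  have hb := hdpos y hy
  have hab : d x ≤ d y + dist x y := by rw [hd]; exact Metric.infDist_le_infDist_add_dist
  have hba : d y ≤ d x + dist x y := by
    rw [hd]; simpa [dist_comm] using Metric.infDist_le_infDist_add_dist (x := y) (y := x)
  obtain ⟨H1, H2, H3⟩ := key_aux (d x) (d y) (dist x y) ha hb dist_nonneg hab hba
  subst hj hu
  simp only
  refine ⟨by linarith, by linarith, fun h => by have := H3 h; linarith⟩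
end

section
/- For all x, y in the unit ball 𝔹ⁿ, (1/2)·ρ_{𝔹ⁿ}(x,y) ≤ u_{𝔹ⁿ}(x,y) ≤ 4·ρ_{𝔹ⁿ}(x,y). -/
open Metric Real

private lemma aux_sqrt_facts (s : ℝ) (hs0 : 0 ≤ s) :
    1 ≤ Real.sqrt (1 + s^2) ∧ (Real.sqrt (1 + s^2))^2 = 1 + s^2 ∧
      Real.sqrt (1 + s^2) ≤ 1 + s ∧ Real.sqrt (1 + s^2) ≤ 1 + s^2/2 ∧
      s < Real.sqrt (1 + s^2) := by
  have h1 : (Real.sqrt (1 + s^2))^2 = 1 + s^2 := Real.sq_sqrt (by positivity)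
  have h0 : 0 ≤ Real.sqrt (1 + s^2) := Real.sqrt_nonneg _
  refine ⟨?_, h1, ?_, ?_, ?_⟩ <;> nlinarith

private lemma aux_key1 (s c d m : ℝ) (hs0 : 0 ≤ s) (hc0 : 0 < c) (hcm : c ≤ m)
    (hscd : s * c ≤ d) (hd0 : 0 ≤ d) :
    s + Real.sqrt (1 + s^2) ≤ ((d + m)/c)^2 := by
  obtain ⟨hw1, hwsq, hws, -, -⟩ := aux_sqrt_facts s hs0
  have hE : s + Real.sqrt (1 + s^2) ≤ 1 + 2*s := by linarith
  have ht2 : ((d + m)/c)^2 = (d+m)^2 / c^2 := by ring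
  rw [ht2, le_div_iff₀ (by positivity)]
  nlinarith

private lemma aux_key2 (s c d m : ℝ) (hs0 : 0 ≤ s) (hc0 : 0 < c) (hm0 : 0 < m)
    (hd2sc : d ≤ 2*s*c) (hq : m^2 ≤ 2*s*c*m + c^2) :
    (d + m)/c ≤ (s + Real.sqrt (1 + s^2))^4 := by
  obtain ⟨hw1, hwsq, -, hws2, hwgt⟩ := aux_sqrt_facts s hs0
  set w : ℝ := Real.sqrt (1 + s^2) with hw_def
  clear_value w
  -- m ≤ c * (s + w)
  have hcw : c^2*w^2 = c^2*(1+s^2) := by rw [hwsq]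
  have hmcE : m ≤ c * (s + w) := by
    have hpos : 0 < m + c*(w - s) := by nlinarith
    nlinarith [hq, hpos, hcw]
  have h1 : (d + m)/c ≤ 2*s + (s + w) := by
    rw [div_le_iff₀ hc0]
    nlinarith
  have h2 : 2*s + (s + w) ≤ 1 + 3*s + s^2/2 := by linarith
  have h3 : (1+s)^4 ≤ (s + w)^4 := by
    apply pow_le_pow_left₀ (by linarith) (by linarith)
  nlinarith [h1, h2, h3, hs0]

set_option maxHeartbeats 2000000

/-- For `x, y` in the unit ball `𝔹ⁿ`, with `ρ` the hyperbolic metric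
(characterized by `sinh(ρ(x,y)/2) = |x−y|/√((1−|x|²)(1−|y|²))`) and
`u(x,y) = 2·log((|x−y| + max{1−|x|,1−|y|})/√((1−|x|)(1−|y|)))`,
one has `(1/2) ρ ≤ u ≤ 4 ρ`. -/
theorem stmt1 {n : ℕ} (ρ u : EuclideanSpace ℝ (Fin n) → EuclideanSpace ℝ (Fin n) → ℝ)
    (hρ : ∀ x ∈ Metric.ball (0 : EuclideanSpace ℝ (Fin n)) 1, ∀ y ∈ Metric.ball (0 : EuclideanSpace ℝ (Fin n)) 1,
      Real.sinh (ρ x y / 2) = dist x y / Real.sqrt ((1 - ‖x‖^2) * (1 - ‖y‖^2)))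
    (hu : u = fun x y => 2 * Real.log ((dist x y + max (1 - ‖x‖) (1 - ‖y‖)) / Real.sqrt ((1 - ‖x‖) * (1 - ‖y‖))))
    (x y : EuclideanSpace ℝ (Fin n))
    (hx : x ∈ Metric.ball (0 : EuclideanSpace ℝ (Fin n)) 1)
    (hy : y ∈ Metric.ball (0 : EuclideanSpace ℝ (Fin n)) 1) :
    (1/2) * ρ x y ≤ u x y ∧ u x y ≤ 4 * ρ x y := by
  have hx1 : ‖x‖ < 1 := by simpa using mem_ball_zero_iff.mp hx
  have hy1 : ‖y‖ < 1 := by simpa using mem_ball_zero_iff.mp hy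
  have hx0 : (0:ℝ) ≤ ‖x‖ := norm_nonneg x
  have hy0 : (0:ℝ) ≤ ‖y‖ := norm_nonneg y
  set a : ℝ := 1 - ‖x‖ with ha_def
  set b : ℝ := 1 - ‖y‖ with hb_def
  have ha : 0 < a := by simp [ha_def]; linarith
  have hb : 0 < b := by simp [hb_def]; linarith
  clear_value a b
  set d : ℝ := dist x y with hd_def
  clear_value d
  have hd0 : 0 ≤ d := by rw [hd_def]; exact dist_nonneg
  have habd : |a - b| ≤ d := by
    have h1 : |‖x‖ - ‖y‖| ≤ ‖x - y‖ := abs_norm_sub_norm_le x y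
    have h2 : d = ‖x - y‖ := by rw [hd_def]; exact dist_eq_norm x y
    have h3 : a - b = ‖y‖ - ‖x‖ := by rw [ha_def, hb_def]; ring
    rw [h2]
    calc |a - b| = |‖x‖ - ‖y‖| := by rw [h3, abs_sub_comm]
    _ ≤ ‖x - y‖ := h1
  set A : ℝ := 1 - ‖x‖^2 with hA_def
  set B : ℝ := 1 - ‖y‖^2 with hB_def
  clear_value A B
  have hAa : a ≤ A ∧ A ≤ 2 * a := by
    constructor <;> (simp only [hA_def, ha_def]; nlinarith only [hx0, hx1])
  have hBb : b ≤ B ∧ B ≤ 2 * b := by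
    constructor <;> (simp only [hB_def, hb_def]; nlinarith only [hy0, hy1])
  have hA0 : 0 < A := lt_of_lt_of_le ha hAa.1
  have hB0 : 0 < B := lt_of_lt_of_le hb hBb.1
  -- s : the hyperbolic "sinh" value
  set s : ℝ := d / Real.sqrt (A * B) with hs_def
  clear_value s
  have hAB0 : 0 < A * B := mul_pos hA0 hB0
  have hsqAB : 0 < Real.sqrt (A * B) := Real.sqrt_pos.mpr hAB0
  have hs0 : 0 ≤ s := by rw [hs_def]; exact div_nonneg hd0 hsqAB.le
  have hrho : ρ x y = 2 * Real.arsinh s := by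
    have h := hρ x hx y hy
    have h2 : Real.sinh (ρ x y / 2) = Real.sinh (Real.arsinh s) := by
      rw [Real.sinh_arsinh, h, hs_def, hd_def, hA_def, hB_def]
    have h3 := Real.sinh_injective h2
    linarith
  set w : ℝ := Real.sqrt (1 + s^2) with hw_def
  clear_value w
  obtain ⟨hw1, hwsq, -, -, hwgt⟩ := aux_sqrt_facts s hs0
  rw [← hw_def] at hw1 hwsq hwgt
  set E : ℝ := s + w with hE_def
  clear_value E
  have hE1 : 1 ≤ E := by rw [hE_def]; linarith
  have hE0 : 0 < E := by linarith
  have harsinh : Real.arsinh s = Real.log E := by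
    rw [hE_def, hw_def]; unfold Real.arsinh; rfl
  -- c = sqrt(a*b), m = max a b
  set c : ℝ := Real.sqrt (a * b) with hc_def
  clear_value c
  have hc0 : 0 < c := by rw [hc_def]; exact Real.sqrt_pos.mpr (mul_pos ha hb)
  have hcsq : c^2 = a * b := by rw [hc_def]; exact Real.sq_sqrt (by positivity)
  set m : ℝ := max a b with hm_def
  clear_value m
  have hma : a ≤ m := by rw [hm_def]; exact le_max_left a b
  have hmb : b ≤ m := by rw [hm_def]; exact le_max_right a b
  have hm0 : 0 < m := lt_of_lt_of_le ha hma
  have hcm : c ≤ m := by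
    have h1 : a * b ≤ m^2 := by
      rcases le_total a b with h | h
      · rw [hm_def, max_eq_right h]; nlinarith only [h, ha, hb]
      · rw [hm_def, max_eq_left h]; nlinarith only [h, ha, hb]
    nlinarith only [hcsq, hc0, hm0, h1]
  -- d = s * sqrt(A*B)
  have hdeq : d = s * Real.sqrt (A * B) := by
    rw [hs_def]; field_simp
  have hABub : Real.sqrt (A * B) ≤ 2 * c := by
    have h1 : A * B ≤ 4 * (a * b) := by nlinarith only [hAa.1, hAa.2, hBb.1, hBb.2, ha, hb]
    calc Real.sqrt (A * B) ≤ Real.sqrt (4 * (a * b)) := Real.sqrt_le_sqrt h1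
    _ = 2 * c := by
        rw [hc_def, show (4:ℝ) * (a*b) = 2^2 * (a*b) by ring, Real.sqrt_mul (by positivity)]
        simp [Real.sqrt_sq]
  have hABlb : c ≤ Real.sqrt (A * B) := by
    rw [hc_def]
    apply Real.sqrt_le_sqrt; nlinarith only [hAa.1, hBb.1, ha, hb]
  have hd2sc : d ≤ 2 * s * c := by
    rw [hdeq]
    nlinarith only [hABub, hs0]
  have hscd : s * c ≤ d := by
    rw [hdeq]; nlinarith only [hABlb, hs0]
  -- t
  set t : ℝ := (d + m) / c with ht_def
  clear_value t
  have ht1 : 1 ≤ t := by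
    rw [ht_def, le_div_iff₀ hc0]
    linarith
  have ht0 : 0 < t := by linarith
  -- min/max facts
  have hmk : m - min a b ≤ d := by
    have h : m - min a b = |a - b| := by rw [hm_def, abs_sub_comm]; exact max_sub_min_eq_abs a b
    linarith [habd]
  have hkm : min a b * m = a * b := by rw [hm_def]; exact min_mul_max a b
  have hmin0 : 0 < min a b := lt_min ha hb
  have hq : m^2 ≤ 2*s*c*m + c^2 := by
    nlinarith only [hkm, hcsq, mul_le_mul_of_nonneg_left hmk hm0.le, mul_le_mul_of_nonneg_left hd2sc hm0.le]
  -- the two key inequalities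
  have hEt2 : E ≤ t^2 := by
    rw [hE_def, hw_def, ht_def]
    exact aux_key1 s c d m hs0 hc0 hcm hscd hd0
  have htE4 : t ≤ E^4 := by
    rw [hE_def, hw_def, ht_def]
    exact aux_key2 s c d m hs0 hc0 hm0 hd2sc hq
  -- put it together
  have hu' : u x y = 2 * Real.log t := by
    rw [hu]; simp only [ht_def, hd_def, ha_def, hb_def, hm_def, hc_def]
  have hrho' : ρ x y = 2 * Real.log E := by rw [hrho, harsinh]
  constructor
  · rw [hu', hrho']
    have h := Real.log_le_log hE0 hEt2
    rw [Real.log_pow] at h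
    push_cast at h
    linarith
  · rw [hu', hrho']
    have h := Real.log_le_log ht0 htE4
    rw [Real.log_pow] at h
    push_cast at h
    linarith
end

section
/- For all x, y in the unit ball 𝔹ⁿ, ρ_{𝔹ⁿ}(x,y) − 2·log 2 ≤ u_{𝔹ⁿ}(x,y) ≤ 2·ρ_{𝔹ⁿ}(x,y) + 2·log 2; that is, the identity map is a quasi-isometry between (𝔹ⁿ, ρ) and (𝔹ⁿ, u). -/
set_option maxHeartbeats 1000000


open Metric Real

/-- For `x, y` in the unit ball, `ρ(x,y) − 2 log 2 ≤ u(x,y) ≤ 2 ρ(x,y) + 2 log 2`,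
where `ρ` is the hyperbolic metric of the unit ball and
`u(x,y) = 2·log((|x−y| + max{1−|x|,1−|y|})/√((1−|x|)(1−|y|)))`. -/
theorem stmt3 {n : ℕ} (ρ u : EuclideanSpace ℝ (Fin n) → EuclideanSpace ℝ (Fin n) → ℝ)
    (hρ : ∀ x ∈ Metric.ball (0 : EuclideanSpace ℝ (Fin n)) 1, ∀ y ∈ Metric.ball (0 : EuclideanSpace ℝ (Fin n)) 1,
      Real.sinh (ρ x y / 2) = dist x y / Real.sqrt ((1 - ‖x‖^2) * (1 - ‖y‖^2)))
    (hu : u = fun x y => 2 * Real.log ((dist x y + max (1 - ‖x‖) (1 - ‖y‖)) / Real.sqrt ((1 - ‖x‖) * (1 - ‖y‖))))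
    (x y : EuclideanSpace ℝ (Fin n))
    (hx : x ∈ Metric.ball (0 : EuclideanSpace ℝ (Fin n)) 1)
    (hy : y ∈ Metric.ball (0 : EuclideanSpace ℝ (Fin n)) 1) :
    ρ x y - 2 * Real.log 2 ≤ u x y ∧ u x y ≤ 2 * ρ x y + 2 * Real.log 2 := by
  simp only [hu]
  have hx1 : ‖x‖ < 1 := by simpa using mem_ball_zero_iff.mp hx
  have hy1 : ‖y‖ < 1 := by simpa using mem_ball_zero_iff.mp hy
  have hx0 : (0:ℝ) ≤ ‖x‖ := norm_nonneg x
  have hy0 : (0:ℝ) ≤ ‖y‖ := norm_nonneg y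
  have hr := hρ x hx y hy
  have hdab0 : |(1 - ‖x‖) - (1 - ‖y‖)| ≤ dist x y := by
    have h1 : |‖x‖ - ‖y‖| ≤ ‖x - y‖ := abs_norm_sub_norm_le x y
    have h3 : (1 - ‖x‖) - (1 - ‖y‖) = -(‖x‖ - ‖y‖) := by ring
    rw [h3, abs_neg, dist_eq_norm]
    exact h1
  set a : ℝ := 1 - ‖x‖ with ha'
  set b : ℝ := 1 - ‖y‖ with hb'
  set d : ℝ := dist x y with hd'
  set A : ℝ := 1 - ‖x‖^2 with hA'
  set B : ℝ := 1 - ‖y‖^2 with hB'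
  clear_value a b d A B
  clear hx hy hρ hu
  have ha : 0 < a := by rw [ha']; linarith
  have hb : 0 < b := by rw [hb']; linarith
  have hd0 : 0 ≤ d := by rw [hd']; exact dist_nonneg
  have hA : 0 < A := by rw [hA']; nlinarith
  have hB : 0 < B := by rw [hB']; nlinarith
  have haA : a ≤ A := by rw [ha', hA']; nlinarith
  have hbB : b ≤ B := by rw [hb', hB']; nlinarith
  have hA2 : A ≤ 2 * a := by rw [ha', hA']; nlinarith
  have hB2 : B ≤ 2 * b := by rw [hb', hB']; nlinarith
  clear ha' hb' hd' hA' hB' hx1 hy1 hx0 hy0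
  rename' hdab0 => hdab
  set sab : ℝ := Real.sqrt (a * b) with hsab'
  set sAB : ℝ := Real.sqrt (A * B) with hsAB'
  have hsab : 0 < sab := Real.sqrt_pos.mpr (by positivity)
  have hsAB : 0 < sAB := Real.sqrt_pos.mpr (by positivity)
  have hsab2 : sab ^ 2 = a * b := Real.sq_sqrt (by positivity)
  have hle1 : sab ≤ sAB := Real.sqrt_le_sqrt (by nlinarith)
  have hle2 : sAB ≤ 2 * sab := by
    have h4 : A * B ≤ 2 ^ 2 * (a * b) := by nlinarith
    calc sAB ≤ Real.sqrt (2 ^ 2 * (a * b)) := Real.sqrt_le_sqrt h4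
      _ = 2 * sab := by
          rw [Real.sqrt_mul (by positivity), Real.sqrt_sq (by norm_num), hsab']
  set M : ℝ := max a b with hM'
  have hM0 : 0 < M := lt_max_of_lt_left ha
  have haM : a ≤ M := le_max_left a b
  have hbM : b ≤ M := le_max_right a b
  have hsabM : sab ≤ M := by
    calc sab ≤ Real.sqrt (M * M) := Real.sqrt_le_sqrt (by nlinarith)
      _ = M := Real.sqrt_mul_self hM0.le
  have hMd : M ≤ d + sab := by
    rcases le_total a b with h | h
    · have hmin : a ≤ sab := by
        calc a = Real.sqrt (a * a) := (Real.sqrt_mul_self ha.le).symm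
          _ ≤ sab := Real.sqrt_le_sqrt (by nlinarith)
      have h5 : b - a ≤ d := by
        have h6 : b - a ≤ |a - b| := by rw [abs_sub_comm]; exact le_abs_self _
        linarith
      have hMb : M = b := max_eq_right h
      linarith
    · have hmin : b ≤ sab := by
        calc b = Real.sqrt (b * b) := (Real.sqrt_mul_self hb.le).symm
          _ ≤ sab := Real.sqrt_le_sqrt (by nlinarith)
      have h5 : a - b ≤ d := le_trans (le_abs_self _) hdab
      have hMa : M = a := max_eq_left h
      linarith
  clear_value sab sAB M
  set s : ℝ := d / sAB with hs'
  set t : ℝ := d / sab with ht'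
  have hs0 : 0 ≤ s := by positivity
  have ht0 : 0 ≤ t := by positivity
  have hst : s ≤ t := div_le_div_of_nonneg_left hd0 hsab hle1
  have hts : t ≤ 2 * s := by
    rw [ht', hs', show 2 * (d / sAB) = 2 * d / sAB by ring]
    rw [div_le_div_iff₀ hsab hsAB]
    nlinarith
  have hrho : ρ x y = 2 * Real.arsinh s := by
    have h2 := congrArg Real.arsinh hr
    rw [Real.arsinh_sinh] at h2
    linarith
  have harsinh : Real.arsinh s = Real.log (s + Real.sqrt (1 + s ^ 2)) := by
    rw [← Real.exp_arsinh, Real.log_exp]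
  set P : ℝ := s + Real.sqrt (1 + s ^ 2) with hP'
  have hsq1 : 1 ≤ Real.sqrt (1 + s ^ 2) := by
    nlinarith [Real.sq_sqrt (show (0:ℝ) ≤ 1 + s ^ 2 by positivity),
      Real.sqrt_nonneg (1 + s ^ 2), sq_nonneg s]
  have hsq2 : Real.sqrt (1 + s ^ 2) ≤ 1 + s := by
    calc Real.sqrt (1 + s ^ 2) ≤ Real.sqrt ((1 + s) ^ 2) := Real.sqrt_le_sqrt (by nlinarith)
      _ = 1 + s := Real.sqrt_sq (by linarith)
  have hP : 0 < P := by rw [hP']; nlinarith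
  set q : ℝ := (d + M) / sab with hq'
  have hq : 0 < q := by positivity
  have hq1 : t + 1 ≤ q := by
    rw [hq', ht', div_add' _ _ _ hsab.ne', div_le_div_iff₀ hsab hsab]
    nlinarith
  have hq2 : q ≤ 2 * t + 1 := by
    rw [hq', ht', show 2 * (d / sab) + 1 = (2 * d + sab) / sab by field_simp,
      div_le_div_iff₀ hsab hsab]
    nlinarith
  rw [hrho, harsinh]
  clear_value s t P q
  constructor
  · have key : P / 2 ≤ q := by nlinarith
    have hlog : Real.log (P / 2) ≤ Real.log q :=
      Real.log_le_log (by positivity) key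
    rw [Real.log_div hP.ne' (by norm_num)] at hlog
    linarith
  · have key : q ≤ 2 * P ^ 2 := by nlinarith
    have hlog : Real.log q ≤ Real.log (2 * P ^ 2) := Real.log_le_log hq key
    rw [Real.log_mul (by norm_num) (by positivity), Real.log_pow] at hlog
    push_cast at hlog
    linarith
end

section
/- For all x, y in the upper half-space ℍⁿ, ρ_{ℍⁿ}(x,y) ≤ u_{ℍⁿ}(x,y). -/
open Metric Real

/-- For `x, y` in the upper half-space `ℍⁿ = {x : xₙ > 0}`, with `ρ` the hyperbolic
metric (characterized by `2 sinh(ρ(x,y)/2) = |x−y|/√(xₙ yₙ)`) and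
`u(x,y) = 2·log((|x−y| + max{xₙ, yₙ})/√(xₙ yₙ))`, one has `ρ(x,y) ≤ u(x,y)`. -/
theorem stmt4 {n : ℕ}
    (ρ u : EuclideanSpace ℝ (Fin (n+1)) → EuclideanSpace ℝ (Fin (n+1)) → ℝ)
    (hρ : ∀ x y : EuclideanSpace ℝ (Fin (n+1)), 0 < x (Fin.last n) → 0 < y (Fin.last n) →
      2 * Real.sinh (ρ x y / 2) = dist x y / Real.sqrt (x (Fin.last n) * y (Fin.last n)))
    (hu : u = fun x y => 2 * Real.log
      ((dist x y + max (x (Fin.last n)) (y (Fin.last n))) / Real.sqrt (x (Fin.last n) * y (Fin.last n))))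
    (x y : EuclideanSpace ℝ (Fin (n+1)))
    (hx : 0 < x (Fin.last n)) (hy : 0 < y (Fin.last n)) :
    ρ x y ≤ u x y := by
  subst hu
  set a := x (Fin.last n) with ha
  set b := y (Fin.last n) with hb
  set d := dist x y with hd
  set s := Real.sqrt (a * b) with hs
  have hd0 : 0 ≤ d := dist_nonneg
  have hs0 : 0 < s := Real.sqrt_pos.mpr (mul_pos hx hy)
  have hs2 : s ^ 2 = a * b := Real.sq_sqrt (mul_pos hx hy).le
  have hm : 0 < max a b := lt_max_of_lt_left hx
  have hm2 : a * b ≤ (max a b) ^ 2 := by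
    have h1 := le_max_left a b
    have h2 := le_max_right a b
    nlinarith
  have ht : 0 < (d + max a b) / s := div_pos (by linarith) hs0
  have hρs := hρ x y hx hy
  have key : Real.sinh (ρ x y / 2) ≤ Real.sinh (Real.log ((d + max a b) / s)) := by
    rw [Real.sinh_log ht]
    have hsinh : Real.sinh (ρ x y / 2) = d / s / 2 := by linarith
    have h1 : d / s ≤ (d + max a b) / s - s / (d + max a b) := by
      rw [div_sub_div _ _ hs0.ne' (by positivity), div_le_div_iff₀ hs0 (by positivity)]
      nlinarith [mul_nonneg hs0.le (mul_nonneg hd0 hm.le), mul_le_mul_of_nonneg_left hm2 hs0.le]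
    rw [hsinh, inv_div]
    linarith
  have := Real.sinh_le_sinh.mp key
  dsimp only
  linarith
end

section
/- The ratio ρ_{ℍⁿ}(t·e₂, (1/t)·e₂) / u_{ℍⁿ}(t·e₂, (1/t)·e₂) tends to 1 as t → ∞; explicitly ρ_{ℍⁿ}(t·e₂,(1/t)·e₂) = 2·log t and u_{ℍⁿ}(t·e₂,(1/t)·e₂) = 2·log((2t²−1)/t) for t > 1, so the inequality ρ_{ℍⁿ} ≤ u_{ℍⁿ} is sharp. -/
open Metric Real Filter

/-- Sharpness of `ρ_{ℍ} ≤ u_{ℍ}` in the half-plane `ℍ² = {x ∈ ℝ² : x₂ > 0}`: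
with `e₂` the second standard basis vector, for `t > 1` one has
`ρ(t e₂, (1/t) e₂) = 2 log t` and `u(t e₂, (1/t) e₂) = 2 log((2t² − 1)/t)`,
and the ratio `ρ/u` tends to `1` as `t → ∞`. -/
theorem stmt5
    (ρ u : EuclideanSpace ℝ (Fin 2) → EuclideanSpace ℝ (Fin 2) → ℝ)
    (hρ : ∀ x y : EuclideanSpace ℝ (Fin 2), 0 < x 1 → 0 < y 1 →
      2 * Real.sinh (ρ x y / 2) = dist x y / Real.sqrt (x 1 * y 1))
    (hu : u = fun x y => 2 * Real.log ((dist x y + max (x 1) (y 1)) / Real.sqrt (x 1 * y 1)))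
    (e₂ : EuclideanSpace ℝ (Fin 2)) (he₂ : e₂ = EuclideanSpace.single 1 1) :
    (∀ t : ℝ, 1 < t →
      ρ (t • e₂) ((1/t) • e₂) = 2 * Real.log t ∧
      u (t • e₂) ((1/t) • e₂) = 2 * Real.log ((2*t^2 - 1)/t)) ∧
    Tendsto (fun t : ℝ => ρ (t • e₂) ((1/t) • e₂) / u (t • e₂) ((1/t) • e₂))
      atTop (nhds 1) := by
  have main : ∀ t : ℝ, 1 < t →
      ρ (t • e₂) ((1/t) • e₂) = 2 * Real.log t ∧
      u (t • e₂) ((1/t) • e₂) = 2 * Real.log ((2*t^2 - 1)/t) := by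
    intro t ht
    have ht0 : (0:ℝ) < t := by linarith
    have hx1 : (t • e₂) 1 = t := by
      simp [he₂, EuclideanSpace.single_apply]
    have hy1 : ((1/t) • e₂) 1 = 1/t := by
      simp [he₂, EuclideanSpace.single_apply]
    have hinv : (0:ℝ) < 1/t := by positivity
    have hinvle : 1/t ≤ 1 := by rw [div_le_one ht0]; linarith
    have hd : dist (t • e₂) ((1/t) • e₂) = t - 1/t := by
      have h1 : (0:ℝ) ≤ t - 1/t := by linarith
      rw [dist_eq_norm, ← sub_smul, he₂, norm_smul, EuclideanSpace.norm_single,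
        Real.norm_eq_abs, abs_of_nonneg h1]
      simp
    have hsqrt : Real.sqrt ((t • e₂) 1 * ((1/t) • e₂) 1) = 1 := by
      rw [hx1, hy1, mul_one_div, div_self (ne_of_gt ht0), Real.sqrt_one]
    constructor
    · have h := hρ (t • e₂) ((1/t) • e₂) (by rw [hx1]; exact ht0) (by rw [hy1]; exact hinv)
      rw [hsqrt, hd, div_one] at h
      have h2 : 2 * Real.sinh (Real.log t) = t - 1/t := by
        rw [Real.sinh_eq, Real.exp_neg, Real.exp_log ht0]
        field_simp
      have : Real.sinh (ρ (t • e₂) ((1/t) • e₂) / 2) = Real.sinh (Real.log t) := by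
        linarith
      have := Real.sinh_injective this
      linarith
    · rw [hu]
      simp only [hsqrt, hd, hx1, hy1, div_one]
      rw [max_eq_left (by linarith)]
      congr 1
      field_simp
      ring
  refine ⟨main, ?_⟩
  have h2t : ∀ t : ℝ, 1 < t → Real.log t ≤ Real.log ((2*t^2-1)/t) ∧
      Real.log ((2*t^2-1)/t) ≤ Real.log 2 + Real.log t := by
    intro t ht
    have ht0 : (0:ℝ) < t := by linarith
    constructor
    · apply Real.log_le_log ht0
      rw [le_div_iff₀ ht0]; nlinarith
    · rw [← Real.log_mul (by norm_num) (ne_of_gt ht0)]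
      apply Real.log_le_log (div_pos (by nlinarith) ht0)
      rw [div_le_iff₀ ht0]; nlinarith
  have hlow : Tendsto (fun t : ℝ => Real.log t / (Real.log 2 + Real.log t)) atTop (nhds 1) := by
    have hden : Tendsto (fun t : ℝ => Real.log 2 + Real.log t) atTop atTop :=
      tendsto_atTop_add_const_left _ _ Real.tendsto_log_atTop
    have h0 : Tendsto (fun t : ℝ => Real.log 2 / (Real.log 2 + Real.log t)) atTop (nhds 0) :=
      Tendsto.div_atTop tendsto_const_nhds hden
    have heq : ∀ᶠ t : ℝ in atTop, 1 - Real.log 2 / (Real.log 2 + Real.log t)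
        = Real.log t / (Real.log 2 + Real.log t) := by
      filter_upwards [eventually_gt_atTop 1] with t ht
      have hd : 0 < Real.log 2 + Real.log t := by
        have := Real.log_pos ht
        have : (0:ℝ) < Real.log 2 := Real.log_pos (by norm_num)
        positivity
      field_simp
      ring
    have := (tendsto_const_nhds (x := (1:ℝ)) (f := atTop)).sub h0
    rw [sub_zero] at this
    exact Tendsto.congr' heq this
  apply tendsto_of_tendsto_of_tendsto_of_le_of_le' hlow tendsto_const_nhds
  · filter_upwards [eventually_gt_atTop 1] with t ht
    obtain ⟨hρt, hut⟩ := main t ht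
    rw [hρt, hut]
    have hlt : 0 < Real.log t := Real.log_pos ht
    have h1 := (h2t t ht).1
    have h2 := (h2t t ht).2
    have hd : 0 < Real.log ((2*t^2-1)/t) := lt_of_lt_of_le hlt h1
    rw [div_le_div_iff₀ (by positivity) (by positivity)]
    have h2pos : (0:ℝ) < Real.log 2 := Real.log_pos (by norm_num)
    nlinarith
  · filter_upwards [eventually_gt_atTop 1] with t ht
    obtain ⟨hρt, hut⟩ := main t ht
    rw [hρt, hut]
    have hlt : 0 < Real.log t := Real.log_pos ht
    have h1 := (h2t t ht).1
    have hd : 0 < Real.log ((2*t^2-1)/t) := lt_of_lt_of_le hlt h1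
    rw [div_le_one (by positivity)]
    linarith
end

section
/- For any domain D ⊊ ℝⁿ with nonempty boundary and x, y ∈ D, 2·τ̃_D(x,y) ≤ u_D(x,y). -/
open Metric Real

/-- For a domain `D ⊊ ℝⁿ` with nonempty boundary,
`τ̃_D(x,y) = log(1 + sup_{p ∈ ∂D} |x−y|/√(|x−p||p−y|))` and
`u_D(x,y) = 2·log((|x−y| + max{d(x),d(y)})/√(d(x)d(y)))` satisfy `2 τ̃_D ≤ u_D`. -/
theorem stmt6 {n : ℕ} (D : Set (EuclideanSpace ℝ (Fin n)))
    (hDopen : IsOpen D) (hDconn : IsConnected D) (hDproper : D ≠ Set.univ)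
    (hbd : (frontier D).Nonempty)
    (d tau u : _)
    (hd : d = fun x => Metric.infDist x (frontier D))
    (htau : tau = fun x y => Real.log (1 + ⨆ p : frontier D,
      dist x y / Real.sqrt (dist x (p : EuclideanSpace ℝ (Fin n)) * dist (p : EuclideanSpace ℝ (Fin n)) y)))
    (hu : u = fun x y => 2 * Real.log ((dist x y + max (d x) (d y)) / Real.sqrt (d x * d y)))
    (x y : EuclideanSpace ℝ (Fin n)) (hx : x ∈ D) (hy : y ∈ D) :
    2 * tau x y ≤ u x y := by
  subst hd htau hu
  have hnotmem : ∀ z ∈ D, z ∉ frontier D := by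
    intro z hz hfz
    rw [hDopen.frontier_eq] at hfz
    exact hfz.2 hz
  have hdx : 0 < infDist x (frontier D) :=
    (isClosed_frontier.notMem_iff_infDist_pos hbd).1 (hnotmem x hx)
  have hdy : 0 < infDist y (frontier D) :=
    (isClosed_frontier.notMem_iff_infDist_pos hbd).1 (hnotmem y hy)
  set dx := infDist x (frontier D)
  set dy := infDist y (frontier D)
  have hs : 0 < Real.sqrt (dx * dy) := Real.sqrt_pos.2 (mul_pos hdx hdy)
  have hne : Nonempty (frontier D) := hbd.to_subtype
  have hSle : (⨆ p : frontier D,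
      dist x y / Real.sqrt (dist x (p : EuclideanSpace ℝ (Fin n)) * dist (p : EuclideanSpace ℝ (Fin n)) y))
      ≤ dist x y / Real.sqrt (dx * dy) := by
    apply ciSup_le
    intro p
    apply div_le_div_of_nonneg_left dist_nonneg hs
    apply Real.sqrt_le_sqrt
    apply mul_le_mul
    · exact infDist_le_dist_of_mem p.2
    · rw [dist_comm]
      exact infDist_le_dist_of_mem p.2
    · exact hdy.le
    · exact dist_nonneg
  have hS0 : (0:ℝ) ≤ ⨆ p : frontier D,
      dist x y / Real.sqrt (dist x (p : EuclideanSpace ℝ (Fin n)) * dist (p : EuclideanSpace ℝ (Fin n)) y) := by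
    obtain ⟨p⟩ := hne
    refine le_trans ?_ (le_ciSup ?_ p)
    · positivity
    · exact ⟨dist x y / Real.sqrt (dx * dy), fun r ⟨q, hq⟩ => by
        subst hq
        apply div_le_div_of_nonneg_left dist_nonneg hs
        apply Real.sqrt_le_sqrt
        apply mul_le_mul (infDist_le_dist_of_mem q.2) _ hdy.le dist_nonneg
        rw [dist_comm]
        exact infDist_le_dist_of_mem q.2⟩
  simp only
  rw [mul_le_mul_iff_right₀ (by norm_num : (0:ℝ) < 2)]
  apply Real.log_le_log (by linarith)
  have hmax : Real.sqrt (dx * dy) ≤ max dx dy := by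
    rw [show max dx dy = Real.sqrt ((max dx dy)^2) from (Real.sqrt_sq (le_max_iff.2 (Or.inl hdx.le))).symm]
    apply Real.sqrt_le_sqrt
    rw [sq]
    exact mul_le_mul (le_max_left _ _) (le_max_right _ _) hdy.le (le_max_iff.2 (Or.inl hdx.le))
  rw [add_div]
  have h1 : (1:ℝ) ≤ max dx dy / Real.sqrt (dx * dy) := (one_le_div hs).2 hmax
  linarith
end

section
/- In the once-punctured space D₀ = ℝⁿ \ {0}, for all x, y ∈ D₀ one has u_{D₀}(x,y) ≤ 2·τ̃_{D₀}(x,y) + 2·log 2, and the constant 2·log 2 is sharp (it is attained in the limit y = e₁, x = t·e₁, t → ∞). -/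
open Metric Real Filter

/-- In the punctured space `D₀ = ℝⁿ \ {0}`, with
`τ̃(x,y) = log(1 + |x−y|/√(|x||y|))` and
`u(x,y) = 2·log((|x−y| + max{|x|,|y|})/√(|x||y|))`, one has
`u ≤ 2 τ̃ + 2 log 2`, and the constant `2 log 2` is attained in the limit
`x = t e₁`, `y = e₁`, `t → ∞`. -/
theorem stmt7 {n : ℕ} (hn : 0 < n)
    (tau u : EuclideanSpace ℝ (Fin n) → EuclideanSpace ℝ (Fin n) → ℝ)
    (htau : tau = fun x y => Real.log (1 + dist x y / Real.sqrt (‖x‖ * ‖y‖)))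
    (hu : u = fun x y => 2 * Real.log ((dist x y + max ‖x‖ ‖y‖) / Real.sqrt (‖x‖ * ‖y‖)))
    (e₁ : EuclideanSpace ℝ (Fin n)) (he₁ : e₁ = EuclideanSpace.single ⟨0, hn⟩ 1) :
    (∀ x y : EuclideanSpace ℝ (Fin n), x ≠ 0 → y ≠ 0 →
      u x y ≤ 2 * tau x y + 2 * Real.log 2) ∧
    Tendsto (fun t : ℝ => u (t • e₁) e₁ - 2 * tau (t • e₁) e₁) atTop
      (nhds (2 * Real.log 2)) := by
  subst htau hu
  have hne : ‖e₁‖ = 1 := by rw [he₁]; simp [EuclideanSpace.norm_single]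
  constructor
  · intro x y hx hy
    have ha : (0:ℝ) < ‖x‖ := norm_pos_iff.mpr hx
    have hb : (0:ℝ) < ‖y‖ := norm_pos_iff.mpr hy
    have hs : (0:ℝ) < Real.sqrt (‖x‖*‖y‖) := Real.sqrt_pos.mpr (mul_pos ha hb)
    have hd : (0:ℝ) ≤ dist x y := dist_nonneg
    set d := dist x y with hdd
    set s := Real.sqrt (‖x‖*‖y‖) with hss
    have hmin : min ‖x‖ ‖y‖ ≤ s := by
      have h0 : min ‖x‖ ‖y‖ = Real.sqrt (min ‖x‖ ‖y‖ * min ‖x‖ ‖y‖) :=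
        (Real.sqrt_mul_self (le_min ha.le hb.le)).symm
      rw [h0]
      apply Real.sqrt_le_sqrt
      rcases le_total ‖x‖ ‖y‖ with h | h
      · rw [min_eq_left h]; nlinarith
      · rw [min_eq_right h]; nlinarith
    have habs : |‖x‖ - ‖y‖| ≤ d := by
      rw [hdd, dist_eq_norm]; exact abs_norm_sub_norm_le x y
    have hM : max ‖x‖ ‖y‖ ≤ d + s := by
      rcases le_total ‖x‖ ‖y‖ with h | h
      · rw [max_eq_right h]
        have h2 : min ‖x‖ ‖y‖ = ‖x‖ := min_eq_left h
        have h3 := abs_le.mp habs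
        rw [h2] at hmin; linarith [h3.1]
      · rw [max_eq_left h]
        have h2 : min ‖x‖ ‖y‖ = ‖y‖ := min_eq_right h
        have h3 := abs_le.mp habs
        rw [h2] at hmin; linarith [h3.2]
    have hMpos : (0:ℝ) < max ‖x‖ ‖y‖ := lt_max_of_lt_left ha
    have hpos1 : (0:ℝ) < (d + max ‖x‖ ‖y‖)/s := div_pos (by linarith) hs
    have hds : d/s*s = d := div_mul_cancel₀ d hs.ne'
    have key : (d + max ‖x‖ ‖y‖)/s ≤ 2*(1 + d/s) := by
      rw [div_le_iff₀ hs]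
      nlinarith [hM, hd, hs]
    have hpos2 : (0:ℝ) < 1 + d/s := by positivity
    calc 2 * Real.log ((d + max ‖x‖ ‖y‖)/s)
        ≤ 2 * Real.log (2*(1 + d/s)) := by
          have := Real.log_le_log hpos1 key
          linarith
      _ = 2 * Real.log (1 + d/s) + 2 * Real.log 2 := by
          rw [Real.log_mul two_ne_zero hpos2.ne']; ring
  · have key2 : ∀ᶠ t : ℝ in atTop,
        (fun t : ℝ => 2 * Real.log ((dist (t • e₁) e₁ + max ‖t • e₁‖ ‖e₁‖) / Real.sqrt (‖t • e₁‖ * ‖e₁‖))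
          - 2 * Real.log (1 + dist (t • e₁) e₁ / Real.sqrt (‖t • e₁‖ * ‖e₁‖))) t
        = 2 * Real.log ((2*t-1)/(t-1+Real.sqrt t)) := by
      filter_upwards [eventually_ge_atTop 1] with t ht
      have ht0 : (0:ℝ) < t := lt_of_lt_of_le one_pos ht
      have hnt : ‖t • e₁‖ = t := by
        rw [norm_smul, hne, mul_one, Real.norm_eq_abs, abs_of_pos ht0]
      have hdist : dist (t • e₁) e₁ = t - 1 := by
        rw [dist_eq_norm]
        have h1 : t • e₁ - e₁ = (t-1) • e₁ := by rw [sub_smul, one_smul]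
        rw [h1, norm_smul, hne, mul_one, Real.norm_eq_abs, abs_of_nonneg (by linarith)]
      have hst : (0:ℝ) < Real.sqrt t := Real.sqrt_pos.mpr ht0
      simp only [hdist, hnt, hne, mul_one]
      rw [max_eq_left ht]
      have h1 : (1:ℝ) + (t-1)/Real.sqrt t = (Real.sqrt t + (t-1))/Real.sqrt t := by
        field_simp
      have hnum : (0:ℝ) < 2*t - 1 := by linarith
      have hden : (0:ℝ) < t - 1 + Real.sqrt t := by linarith
      have hden' : (0:ℝ) < Real.sqrt t + (t-1) := by linarith
      have h2 : t - 1 + t = 2*t - 1 := by ring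
      rw [h2, h1, Real.log_div hnum.ne' hst.ne', Real.log_div hden'.ne' hst.ne',
        Real.log_div hnum.ne' hden.ne']
      have h3 : Real.sqrt t + (t-1) = t - 1 + Real.sqrt t := by ring
      rw [h3]; ring
    have hratio : Tendsto (fun t:ℝ => (2*t-1)/(t-1+Real.sqrt t)) atTop (nhds 2) := by
      have hsq : Tendsto Real.sqrt atTop atTop := by
        refine tendsto_atTop_atTop.mpr fun b => ⟨b^2, fun t ht => ?_⟩
        calc b ≤ |b| := le_abs_self b
          _ = Real.sqrt (b^2) := (Real.sqrt_sq_eq_abs b).symm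
          _ ≤ Real.sqrt t := Real.sqrt_le_sqrt ht
      have h1 : Tendsto (fun t:ℝ => 2 - t⁻¹) atTop (nhds 2) := by
        have ha : Tendsto (fun t:ℝ => (2:ℝ) - t⁻¹) atTop (nhds (2 - 0)) :=
          tendsto_const_nhds.sub tendsto_inv_atTop_zero
        simpa using ha
      have h2 : Tendsto (fun t:ℝ => 1 - t⁻¹ + (Real.sqrt t)⁻¹) atTop (nhds 1) := by
        have ha : Tendsto (fun t:ℝ => (1:ℝ) - t⁻¹) atTop (nhds (1 - 0)) :=
          tendsto_const_nhds.sub tendsto_inv_atTop_zero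
        have hb : Tendsto (fun t:ℝ => (Real.sqrt t)⁻¹) atTop (nhds 0) :=
          hsq.inv_tendsto_atTop
        simpa using ha.add hb
      have h3 := h1.div h2 one_ne_zero
      refine Tendsto.congr' ?_ (by simpa using h3)
      filter_upwards [eventually_ge_atTop 1] with t ht
      have ht0 : (0:ℝ) < t := lt_of_lt_of_le one_pos ht
      have hst : (0:ℝ) < Real.sqrt t := Real.sqrt_pos.mpr ht0
      have hts : Real.sqrt t * Real.sqrt t = t := Real.mul_self_sqrt ht0.le
      have hden : (0:ℝ) < 1 - t⁻¹ + (Real.sqrt t)⁻¹ := by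
        have h4 : t⁻¹ ≤ 1 := by rw [inv_le_one_iff₀]; right; exact ht
        have : (0:ℝ) < (Real.sqrt t)⁻¹ := by positivity
        linarith
      have hden2 : (0:ℝ) < t - 1 + Real.sqrt t := by linarith
      simp only [Pi.div_apply]
      rw [div_eq_div_iff hden.ne' hden2.ne']
      field_simp
      linear_combination (2*t-1)*hts
    have hlog : Tendsto (fun t:ℝ => 2 * Real.log ((2*t-1)/(t-1+Real.sqrt t))) atTop
        (nhds (2 * Real.log 2)) := by
      exact (((Real.continuousAt_log two_ne_zero).tendsto.comp hratio).const_mul 2)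
    exact hlog.congr' (key2.mono fun t h => h.symm)
end

section
/- In the once-punctured space D₀ = ℝⁿ \ {0}, for all x, y ∈ D₀ one has u_{D₀}(x,y) ≤ 4·τ̃_{D₀}(x,y). -/
open Metric Real

/-- In the punctured space `D₀ = ℝⁿ \ {0}`, with
`τ̃(x,y) = log(1 + |x−y|/√(|x||y|))` and
`u(x,y) = 2·log((|x−y| + max{|x|,|y|})/√(|x||y|))`, one has `u ≤ 4 τ̃`. -/
theorem stmt8 {n : ℕ}
    (tau u : EuclideanSpace ℝ (Fin n) → EuclideanSpace ℝ (Fin n) → ℝ)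
    (htau : tau = fun x y => Real.log (1 + dist x y / Real.sqrt (‖x‖ * ‖y‖)))
    (hu : u = fun x y => 2 * Real.log ((dist x y + max ‖x‖ ‖y‖) / Real.sqrt (‖x‖ * ‖y‖)))
    (x y : EuclideanSpace ℝ (Fin n)) (hx : x ≠ 0) (hy : y ≠ 0) :
    u x y ≤ 4 * tau x y := by
  subst htau hu
  simp only
  set d := dist x y with hd
  set a := ‖x‖ with hA
  set b := ‖y‖ with hB
  have ha : 0 < a := norm_pos_iff.mpr hx
  have hb : 0 < b := norm_pos_iff.mpr hy
  set s := Real.sqrt (a * b) with hs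
  have hs0 : 0 < s := Real.sqrt_pos.mpr (by positivity)
  have hs2 : s ^ 2 = a * b := Real.sq_sqrt (by positivity)
  have hd0 : 0 ≤ d := dist_nonneg
  have habs : |a - b| ≤ d := by
    rw [hd, dist_eq_norm]
    exact abs_norm_sub_norm_le x y
  have hab1 : a ≤ b + d := by
    have := abs_le.mp habs
    linarith [this.2]
  have hab2 : b ≤ a + d := by
    have := abs_le.mp habs
    linarith [this.1]
  -- key algebraic inequality
  have key : s * (d + max a b) ≤ (s + d) ^ 2 := by
    rcases max_cases a b with ⟨hmax, hle⟩ | ⟨hmax, hle⟩ <;> rw [hmax]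
    · have hsa : s ≤ a := by nlinarith
      nlinarith
    · have hsb : s ≤ b := by nlinarith
      nlinarith
  have hMpos : 0 < d + max a b := by
    have : 0 < max a b := lt_of_lt_of_le ha (le_max_left a b)
    linarith
  have hApos : 0 < (d + max a b) / s := div_pos hMpos hs0
  have hBpos : 0 < 1 + d / s := by positivity
  have hAB : (d + max a b) / s ≤ (1 + d / s) ^ 2 := by
    have h1 : (1 : ℝ) + d / s = (s + d) / s := by field_simp
    rw [h1, div_pow, div_le_div_iff₀ hs0 (pow_pos hs0 2)]
    nlinarith
  have hlog : Real.log ((d + max a b) / s) ≤ Real.log ((1 + d / s) ^ 2) :=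
    Real.log_le_log hApos hAB
  rw [Real.log_pow] at hlog
  push_cast at hlog
  linarith
end

section
/- Let p ≠ q in ℝⁿ and D = ℝⁿ \ {p, q}. Then for all x, y ∈ D, u_D(x,y) ≤ 4·τ̃_D(x,y). -/
open Metric Real

private lemma aux_alg (t m D w : ℝ) (ht : 0 ≤ t) (hm : 0 < m) (hD : 0 < D)
    (hw : w^2 = m*(t+m)) (hwm : m ≤ w) (hwtm : w ≤ t+m)
    (hD1 : m ≤ D) (hD2 : D ≤ t+m) :
    (t+D)^2 * w^4 ≤ m * D * (w+t)^4 := by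
  have hw0 : 0 < w := lt_of_lt_of_le hm hwm
  rcases le_total (t^2) (D*m) with h | h
  · have hin : (0:ℝ) ≤ D*(t+m) - t^2 := by nlinarith [mul_nonneg hD.le ht]
    have h1 : (t+D)^2 * (t+m) ≤ (2*t+m)^2 * D := by
      nlinarith [mul_nonneg (by linarith : (0:ℝ) ≤ t+m-D) hin]
    have h2 : w * (2*t+m) ≤ (w+t)^2 := by nlinarith
    have h3 : w^2 * (2*t+m)^2 ≤ ((w+t)^2)^2 := by
      nlinarith [mul_nonneg hw0.le (by linarith : (0:ℝ) ≤ 2*t+m), sq_nonneg (w+t)]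
    calc (t+D)^2 * w^4 = (t+D)^2 * (t+m) * (m * w^2) := by
          linear_combination ((t+D)^2 * w^2) * hw
      _ ≤ (2*t+m)^2 * D * (m * w^2) := by
          apply mul_le_mul_of_nonneg_right h1; positivity
      _ = (w^2 * (2*t+m)^2) * (m * D) := by ring
      _ ≤ ((w+t)^2)^2 * (m * D) := by
          apply mul_le_mul_of_nonneg_right h3; positivity
      _ = m * D * (w+t)^4 := by ring
  · have h1 : (t+D)^2 * m ≤ (t+m)^2 * D := by
      nlinarith [mul_nonneg (by linarith : (0:ℝ) ≤ D-m) (by linarith : (0:ℝ) ≤ t^2 - D*m)]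
    have h2 : (t+m)^2 ≤ (w+t)^2 := by nlinarith
    calc (t+D)^2 * w^4 = (t+D)^2 * m * (m*(t+m)^2) := by
          linear_combination ((t+D)^2 * (w^2 + m*(t+m))) * hw
      _ ≤ (t+m)^2 * D * (m*(t+m)^2) := by
          apply mul_le_mul_of_nonneg_right h1; positivity
      _ = ((t+m)^2)^2 * (m * D) := by ring
      _ ≤ ((w+t)^2)^2 * (m * D) := by
          apply mul_le_mul_of_nonneg_right (by nlinarith [sq_nonneg (t+m), sq_nonneg (w+t)]) ; positivity
      _ = m * D * (w+t)^4 := by ring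

/-- In the twice-punctured space `D = ℝⁿ \ {p, q}` (`p ≠ q`), with
`d(x) = min{|x−p|, |x−q|}`,
`τ̃(x,y) = log(1 + max{|x−y|/√(|x−p||y−p|), |x−y|/√(|x−q||y−q|)})` and
`u(x,y) = 2·log((|x−y| + max{d(x),d(y)})/√(d(x)d(y)))`, one has `u ≤ 4 τ̃`. -/
theorem stmt9 {n : ℕ} (p q : EuclideanSpace ℝ (Fin n)) (hpq : p ≠ q)
    (d tau u : _)
    (hd : d = fun x : EuclideanSpace ℝ (Fin n) => min (dist x p) (dist x q))
    (htau : tau = fun x y : EuclideanSpace ℝ (Fin n) => Real.log (1 +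
      max (dist x y / Real.sqrt (dist x p * dist y p))
          (dist x y / Real.sqrt (dist x q * dist y q))))
    (hu : u = fun x y : EuclideanSpace ℝ (Fin n) =>
      2 * Real.log ((dist x y + max (d x) (d y)) / Real.sqrt (d x * d y)))
    (x y : EuclideanSpace ℝ (Fin n)) (hx : x ≠ p ∧ x ≠ q) (hy : y ≠ p ∧ y ≠ q) :
    u x y ≤ 4 * tau x y := by
  obtain ⟨hxp, hxq⟩ := hx
  obtain ⟨hyp, hyq⟩ := hy
  have hxp' : (0:ℝ) < dist x p := dist_pos.2 hxp
  have hxq' : (0:ℝ) < dist x q := dist_pos.2 hxq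
  have hyp' : (0:ℝ) < dist y p := dist_pos.2 hyp
  have hyq' : (0:ℝ) < dist y q := dist_pos.2 hyq
  subst hd htau hu
  simp only
  set t := dist x y with hT
  have ht : 0 ≤ t := dist_nonneg
  have trixy : ∀ c : EuclideanSpace ℝ (Fin n), dist x c ≤ t + dist y c := by
    intro c; exact dist_triangle x y c
  have triyx : ∀ c : EuclideanSpace ℝ (Fin n), dist y c ≤ t + dist x c := by
    intro c
    calc dist y c ≤ dist y x + dist x c := dist_triangle y x c
      _ = t + dist x c := by rw [dist_comm y x]
  set dx := min (dist x p) (dist x q) with hdx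
  set dy := min (dist y p) (dist y q) with hdy
  have hdx0 : 0 < dx := lt_min hxp' hxq'
  have hdy0 : 0 < dy := lt_min hyp' hyq'
  set m := min dx dy with hm
  set D := max dx dy with hD
  have hm0 : 0 < m := lt_min hdx0 hdy0
  have hmD : m ≤ D := min_le_max
  have hD0 : 0 < D := lt_of_lt_of_le hm0 hmD
  have hxy1 : dx ≤ t + dy := by
    rcases min_cases (dist y p) (dist y q) with ⟨h1, _⟩ | ⟨h1, _⟩
    · have h2 : dx ≤ dist x p := min_le_left _ _
      have h3 := trixy p
      rw [hdy, h1]; linarith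
    · have h2 : dx ≤ dist x q := min_le_right _ _
      have h3 := trixy q
      rw [hdy, h1]; linarith
  have hxy2 : dy ≤ t + dx := by
    rcases min_cases (dist x p) (dist x q) with ⟨h1, _⟩ | ⟨h1, _⟩
    · have h2 : dy ≤ dist y p := min_le_left _ _
      have h3 := triyx p
      rw [hdx, h1]; linarith
    · have h2 : dy ≤ dist y q := min_le_right _ _
      have h3 := triyx q
      rw [hdx, h1]; linarith
  have hDtm : D ≤ t + m := by
    rcases le_total dx dy with h | h
    · rw [hm, hD, min_eq_left h, max_eq_right h]; exact hxy2
    · rw [hm, hD, min_eq_right h, max_eq_left h]; exact hxy1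
  set w := Real.sqrt (m * (t + m)) with hwdef
  have hmtm : (0:ℝ) < m * (t+m) := by positivity
  have hw2 : w^2 = m * (t+m) := Real.sq_sqrt hmtm.le
  have hw0 : 0 < w := Real.sqrt_pos.2 hmtm
  have hwm : m ≤ w := by
    rw [hwdef]
    calc m = Real.sqrt (m*m) := by rw [Real.sqrt_mul_self hm0.le]
      _ ≤ Real.sqrt (m*(t+m)) := Real.sqrt_le_sqrt (by nlinarith)
  have hwtm : w ≤ t + m := by
    rw [hwdef]
    calc Real.sqrt (m*(t+m)) ≤ Real.sqrt ((t+m)*(t+m)) := Real.sqrt_le_sqrt (by nlinarith)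
      _ = t + m := Real.sqrt_mul_self (by linarith)
  set r := t / w with hr
  have hr0 : 0 ≤ r := by positivity
  set M := max (t / Real.sqrt (dist x p * dist y p)) (t / Real.sqrt (dist x q * dist y q)) with hM
  -- M ≥ r
  have key : ∀ a b : ℝ, 0 < a → 0 < b → a * b ≤ m * (t+m) → r ≤ t / Real.sqrt (a*b) := by
    intro a b ha hb hab
    rw [hr, hwdef]
    exact div_le_div_of_nonneg_left ht (Real.sqrt_pos.2 (by positivity)) (Real.sqrt_le_sqrt hab)
  have hbounds : (dist x p * dist y p ≤ m*(t+m)) ∨ (dist x q * dist y q ≤ m*(t+m)) := by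
    rcases min_cases dx dy with ⟨h, _⟩ | ⟨h, _⟩
    · -- m = dx
      have hmdx : m = dx := by rw [hm]; exact h
      rcases min_cases (dist x p) (dist x q) with ⟨h1, _⟩ | ⟨h1, _⟩
      · left
        have e1 : dist x p = m := by rw [hmdx, hdx, h1]
        have e2 : dist y p ≤ t + m := by have := triyx p; rw [e1] at this; exact this
        calc dist x p * dist y p = m * dist y p := by rw [e1]
          _ ≤ m * (t+m) := mul_le_mul_of_nonneg_left e2 hm0.le
      · right
        have e1 : dist x q = m := by rw [hmdx, hdx, h1]
        have e2 : dist y q ≤ t + m := by have := triyx q; rw [e1] at this; exact this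
        calc dist x q * dist y q = m * dist y q := by rw [e1]
          _ ≤ m * (t+m) := mul_le_mul_of_nonneg_left e2 hm0.le
    · -- m = dy
      have hmdy : m = dy := by rw [hm]; exact h
      rcases min_cases (dist y p) (dist y q) with ⟨h1, _⟩ | ⟨h1, _⟩
      · left
        have e1 : dist y p = m := by rw [hmdy, hdy, h1]
        have e2 : dist x p ≤ t + m := by have := trixy p; rw [e1] at this; exact this
        calc dist x p * dist y p = dist x p * m := by rw [e1]
          _ ≤ (t+m) * m := mul_le_mul_of_nonneg_right e2 hm0.le
          _ = m * (t+m) := by ring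
      · right
        have e1 : dist y q = m := by rw [hmdy, hdy, h1]
        have e2 : dist x q ≤ t + m := by have := trixy q; rw [e1] at this; exact this
        calc dist x q * dist y q = dist x q * m := by rw [e1]
          _ ≤ (t+m) * m := mul_le_mul_of_nonneg_right e2 hm0.le
          _ = m * (t+m) := by ring
  have hrM : r ≤ M := by
    rcases hbounds with h | h
    · exact (key _ _ hxp' hyp' h).trans (le_max_left _ _)
    · exact (key _ _ hxq' hyq' h).trans (le_max_right _ _)
  have hM0 : 0 ≤ M := hr0.trans hrM
  -- main algebraic bound
  have halg := aux_alg t m D w ht hm0 hD0 hw2 hwm hwtm hmD hDtm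
  have h1r : 1 + r = (w+t)/w := by rw [hr]; field_simp
  have hsqrtmD : (0:ℝ) < Real.sqrt (m*D) := Real.sqrt_pos.2 (by positivity)
  have hsq : (t+D)^2 ≤ (Real.sqrt (m*D) * (1+r)^2)^2 := by
    have e : (Real.sqrt (m*D) * (1+r)^2)^2 = (m*D*(w+t)^4)/w^4 := by
      rw [mul_pow, ← pow_mul, h1r, div_pow, Real.sq_sqrt (by positivity : (0:ℝ) ≤ m*D)]
      field_simp
      ring
    rw [e, le_div_iff₀ (by positivity : (0:ℝ) < w^4)]
    exact halg
  have hA : (t+D)/Real.sqrt (m*D) ≤ (1+r)^2 := by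
    rw [div_le_iff₀ hsqrtmD]
    have h1 : t + D ≤ Real.sqrt (m*D) * (1+r)^2 := by
      have h2 := Real.sqrt_le_sqrt hsq
      rwa [Real.sqrt_sq (by positivity), Real.sqrt_sq (by positivity)] at h2
    linarith
  have hAM : (t+D)/Real.sqrt (m*D) ≤ (1+M)^2 :=
    hA.trans (pow_le_pow_left₀ (by linarith) (by linarith) 2)
  have hdxdy : dx * dy = m * D := (min_mul_max dx dy).symm
  have hApos : 0 < (t+D)/Real.sqrt (m*D) := by positivity
  have hlog : Real.log ((t+D)/Real.sqrt (m*D)) ≤ Real.log ((1+M)^2) :=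
    Real.log_le_log hApos hAM
  rw [Real.log_pow] at hlog
  rw [hdxdy]
  push_cast at hlog
  linarith
end

section
/- In the unit ball 𝔹ⁿ, lim_{|x|→1} u_{𝔹ⁿ}(x,−x) / (4·τ̃_{𝔹ⁿ}(x,−x)) = 1, where u_{𝔹ⁿ}(x,−x) = 2·log((1+|x|)/(1−|x|)) and τ̃_{𝔹ⁿ}(x,−x) = log(1 + 2|x|/√(1−|x|²)); hence the inequality u_D ≤ 4·τ̃_D is sharp. -/
open Metric Real Filter

private lemma dist_anti {n : ℕ} (v : EuclideanSpace ℝ (Fin n)) (hv : ‖v‖ = 1) {r : ℝ}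
    (h0 : 0 < r) : dist (r • v) (-(r • v)) = 2 * r := by
  rw [dist_eq_norm, sub_neg_eq_add, ← two_smul ℝ, smul_smul, norm_smul, hv]
  simp [abs_of_pos, h0, mul_pos]

private lemma prod_ge {n : ℕ} (v p : EuclideanSpace ℝ (Fin n)) (hv : ‖v‖ = 1) (hp : ‖p‖ = 1)
    {r : ℝ} (h0 : 0 < r) (h1 : r < 1) :
    1 - r ^ 2 ≤ dist (r • v) p * dist p (-(r • v)) := by
  have hd1 : (dist (r • v) p)^2 = r^2 - 2*(r * (inner ℝ v p : ℝ)) + 1 := by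
    rw [dist_eq_norm, norm_sub_sq_real, real_inner_smul_left, norm_smul, hv, hp]
    simp [mul_pow, sq_abs]
  have hd2 : (dist p (-(r • v)))^2 = r^2 + 2*(r * (inner ℝ v p : ℝ)) + 1 := by
    rw [dist_eq_norm, sub_neg_eq_add, norm_add_sq_real, real_inner_smul_right, norm_smul, hv, hp,
      real_inner_comm]
    simp [mul_pow, sq_abs]
    ring
  have htt : (inner ℝ v p : ℝ)^2 ≤ 1 := by
    have := abs_real_inner_le_norm v p
    rw [hv, hp] at this
    nlinarith [abs_nonneg (inner ℝ v p : ℝ), sq_abs (inner ℝ v p : ℝ)]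
  have hsq : (1 - r^2)^2 ≤ (dist (r • v) p * dist p (-(r • v)))^2 := by
    have hexp : (dist (r • v) p * dist p (-(r • v)))^2
        = (dist (r • v) p)^2 * (dist p (-(r • v)))^2 := by ring
    rw [hexp, hd1, hd2]
    nlinarith [mul_le_mul_of_nonneg_left htt (sq_nonneg r), sq_nonneg r]
  nlinarith [hsq, mul_nonneg (dist_nonneg (x := r • v) (y := p))
    (dist_nonneg (x := p) (y := -(r • v))), sq_nonneg (1 - r^2)]

private lemma sup_eq {n : ℕ} (v : EuclideanSpace ℝ (Fin n)) (hv : ‖v‖ = 1) {r : ℝ}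
    (h0 : 0 < r) (h1 : r < 1) :
    (⨆ p : (Metric.sphere (0 : EuclideanSpace ℝ (Fin n)) 1 : Set (EuclideanSpace ℝ (Fin n))),
      dist (r • v) (-(r • v)) / Real.sqrt (dist (r • v) (p : EuclideanSpace ℝ (Fin n)) *
        dist (p : EuclideanSpace ℝ (Fin n)) (-(r • v))))
      = 2 * r / Real.sqrt (1 - r ^ 2) := by
  have hvmem : v ∈ (Metric.sphere (0 : EuclideanSpace ℝ (Fin n)) 1 : Set _) := by
    simp [hv]
  haveI : Nonempty (Metric.sphere (0 : EuclideanSpace ℝ (Fin n)) 1 : Set _) := ⟨⟨v, hvmem⟩⟩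
  have hr2 : (0:ℝ) < 1 - r ^ 2 := by nlinarith
  have hbound : ∀ p : (Metric.sphere (0 : EuclideanSpace ℝ (Fin n)) 1 : Set _),
      dist (r • v) (-(r • v)) / Real.sqrt (dist (r • v) (p : EuclideanSpace ℝ (Fin n)) *
        dist (p : EuclideanSpace ℝ (Fin n)) (-(r • v))) ≤ 2 * r / Real.sqrt (1 - r ^ 2) := by
    rintro ⟨p, hp⟩
    have hp1 : ‖p‖ = 1 := by simpa using hp
    rw [dist_anti v hv h0]
    exact div_le_div_of_nonneg_left (by linarith) (Real.sqrt_pos.2 hr2)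
      (Real.sqrt_le_sqrt (prod_ge v p hv hp1 h0 h1))
  apply le_antisymm
  · exact ciSup_le hbound
  · have hval : dist (r • v) (-(r • v)) / Real.sqrt (dist (r • v) v * dist v (-(r • v)))
        = 2 * r / Real.sqrt (1 - r ^ 2) := by
      have e1 : dist (r • v) v = 1 - r := by
        rw [dist_eq_norm]
        nth_rewrite 2 [← one_smul ℝ v]
        rw [← sub_smul, norm_smul, hv]
        simp only [Real.norm_eq_abs, mul_one, abs_of_nonpos (by linarith : r - 1 ≤ 0)]
        ring
      have e2 : dist v (-(r • v)) = 1 + r := by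
        rw [dist_eq_norm, sub_neg_eq_add]
        nth_rewrite 1 [← one_smul ℝ v]
        rw [← add_smul, norm_smul, hv]
        simp only [Real.norm_eq_abs, mul_one, abs_of_pos (by linarith : (0:ℝ) < 1 + r)]
      rw [dist_anti v hv h0, e1, e2]
      ring_nf
    calc 2 * r / Real.sqrt (1 - r ^ 2) = _ := hval.symm
      _ ≤ _ := le_ciSup ⟨2 * r / Real.sqrt (1 - r ^ 2), by
          rintro x ⟨p, rfl⟩; exact hbound p⟩ (⟨v, hvmem⟩ : (Metric.sphere (0 : EuclideanSpace ℝ (Fin n)) 1 : Set _))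

private lemma lim_aux :
    Tendsto (fun r : ℝ => (2 * Real.log ((1 + r) / (1 - r))) /
        (4 * Real.log (1 + 2 * r / Real.sqrt (1 - r ^ 2))))
      (nhdsWithin 1 (Set.Iio 1)) (nhds 1) := by
  set N : ℝ → ℝ := fun r => 2 * Real.log ((1 + r) / (1 - r)) with hN
  set D : ℝ → ℝ := fun r => 4 * Real.log (1 + 2 * r / Real.sqrt (1 - r ^ 2)) with hD
  have hmem : Set.Ioo (1/2 : ℝ) 1 ∈ nhdsWithin (1:ℝ) (Set.Iio 1) := by
    rw [show Set.Ioo (1/2 : ℝ) 1 = Set.Ioi (1/2 : ℝ) ∩ Set.Iio 1 from rfl]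
    exact Filter.inter_mem (mem_nhdsWithin_of_mem_nhds (Ioi_mem_nhds (by norm_num)))
      self_mem_nhdsWithin
  -- D tends to atTop
  have hsqrt : Tendsto (fun r : ℝ => Real.sqrt (1 - r ^ 2)) (nhdsWithin 1 (Set.Iio 1))
      (nhdsWithin 0 (Set.Ioi 0)) := by
    apply tendsto_nhdsWithin_of_tendsto_nhds_of_eventually_within
    · have : Tendsto (fun r : ℝ => Real.sqrt (1 - r ^ 2)) (nhds 1) (nhds 0) := by
        have := (Real.continuous_sqrt.comp (by continuity : Continuous fun r : ℝ => 1 - r ^ 2)).tendsto 1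
        simpa [Function.comp_def] using this
      exact this.mono_left nhdsWithin_le_nhds
    · filter_upwards [hmem] with r hr
      have : (0:ℝ) < 1 - r ^ 2 := by nlinarith [hr.1, hr.2]
      exact Real.sqrt_pos.2 this
  have hDtop : Tendsto D (nhdsWithin 1 (Set.Iio 1)) atTop := by
    have h1 : Tendsto (fun r : ℝ => 2 * r) (nhdsWithin 1 (Set.Iio 1)) (nhds 2) := by
      have := (continuous_const.mul continuous_id : Continuous fun r : ℝ => 2 * r).tendsto 1
      simpa [Pi.mul_def] using this.mono_left nhdsWithin_le_nhds
    have h2 : Tendsto (fun r : ℝ => (Real.sqrt (1 - r ^ 2))⁻¹) (nhdsWithin 1 (Set.Iio 1)) atTop :=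
      hsqrt.inv_tendsto_nhdsGT_zero
    have h3 : Tendsto (fun r : ℝ => 2 * r / Real.sqrt (1 - r ^ 2)) (nhdsWithin 1 (Set.Iio 1))
        atTop := by
      simpa [div_eq_mul_inv] using h1.pos_mul_atTop two_pos h2
    have h4 : Tendsto (fun r : ℝ => 1 + 2 * r / Real.sqrt (1 - r ^ 2))
        (nhdsWithin 1 (Set.Iio 1)) atTop := tendsto_atTop_add_const_left _ 1 h3
    have h5 := Real.tendsto_log_atTop.comp h4
    exact (tendsto_const_mul_atTop_of_pos (by norm_num : (0:ℝ) < 4)).mpr h5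
  -- N - D tends to 0
  have hdiff : Tendsto (fun r => N r - D r) (nhdsWithin 1 (Set.Iio 1)) (nhds 0) := by
    have hG : Tendsto (fun r : ℝ => 4 * Real.log (1 + r) - 4 * Real.log (Real.sqrt (1 - r ^ 2) + 2 * r))
        (nhdsWithin 1 (Set.Iio 1)) (nhds 0) := by
      have t1 : Tendsto (fun r : ℝ => Real.log (1 + r)) (nhdsWithin 1 (Set.Iio 1))
          (nhds (Real.log 2)) := by
        have : Tendsto (fun r : ℝ => (1:ℝ) + r) (nhds 1) (nhds 2) := by
          have := (continuous_const.add continuous_id : Continuous fun r : ℝ => 1 + r).tendsto 1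
          simpa [Pi.add_def, one_add_one_eq_two] using this
        exact ((Real.continuousAt_log (by norm_num)).tendsto.comp this).mono_left
          nhdsWithin_le_nhds
      have t2 : Tendsto (fun r : ℝ => Real.log (Real.sqrt (1 - r ^ 2) + 2 * r))
          (nhdsWithin 1 (Set.Iio 1)) (nhds (Real.log 2)) := by
        have ha : Tendsto (fun r : ℝ => Real.sqrt (1 - r ^ 2) + 2 * r) (nhds 1) (nhds 2) := by
          have hc : Continuous fun r : ℝ => Real.sqrt (1 - r ^ 2) + 2 * r := by continuity
          have := hc.tendsto 1
          simpa using this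
        exact ((Real.continuousAt_log (by norm_num)).tendsto.comp ha).mono_left
          nhdsWithin_le_nhds
      have := ((t1.const_mul (4:ℝ)).sub (t2.const_mul (4:ℝ)))
      simpa using this
    apply hG.congr'
    filter_upwards [hmem] with r hr
    obtain ⟨hr0, hr1⟩ := hr
    have h0 : (0:ℝ) < r := by linarith
    have h1m : (0:ℝ) < 1 - r := by linarith
    have h1p : (0:ℝ) < 1 + r := by linarith
    have hr2 : (0:ℝ) < 1 - r ^ 2 := by nlinarith
    set s := Real.sqrt (1 - r ^ 2) with hs
    have hspos : 0 < s := Real.sqrt_pos.2 hr2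
    have e1 : Real.log ((1 + r) / (1 - r)) = Real.log (1 + r) - Real.log (1 - r) :=
      Real.log_div h1p.ne' h1m.ne'
    have e2 : (1:ℝ) + 2 * r / s = (s + 2 * r) / s := by field_simp
    have e3 : Real.log ((s + 2 * r) / s) = Real.log (s + 2 * r) - Real.log s :=
      Real.log_div (by positivity) hspos.ne'
    have e4 : Real.log s = (Real.log (1 - r) + Real.log (1 + r)) / 2 := by
      rw [hs, Real.log_sqrt hr2.le, show (1:ℝ) - r ^ 2 = (1 - r) * (1 + r) by ring,
        Real.log_mul h1m.ne' h1p.ne']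
    simp only [hN, hD, e1, ← hs, e2, e3, e4]
    ring
  -- conclude
  have hDpos : ∀ᶠ r in nhdsWithin (1:ℝ) (Set.Iio 1), 0 < D r := hDtop.eventually_gt_atTop 0
  have hfinal : Tendsto (fun r => 1 + (N r - D r) * (D r)⁻¹) (nhdsWithin 1 (Set.Iio 1))
      (nhds 1) := by
    have := hdiff.mul (tendsto_inv_atTop_zero.comp hDtop)
    simpa using (tendsto_const_nhds (x := (1:ℝ))).add this
  apply hfinal.congr'
  filter_upwards [hDpos] with r hr
  show 1 + (N r - D r) * (D r)⁻¹ = N r / D r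
  rw [sub_mul, mul_inv_cancel₀ hr.ne', ← div_eq_mul_inv]
  ring

/-- Sharpness of `u_D ≤ 4 τ̃_D` in the unit ball: for antipodal points `x, −x`,
`u_{𝔹ⁿ}(x,−x) = 2 log((1+|x|)/(1−|x|))`, `τ̃_{𝔹ⁿ}(x,−x) = log(1 + 2|x|/√(1−|x|²))`,
and `u_{𝔹ⁿ}(x,−x)/(4 τ̃_{𝔹ⁿ}(x,−x)) → 1` as `|x| → 1`. -/
theorem stmt11 {n : ℕ}
    (tau u : EuclideanSpace ℝ (Fin n) → EuclideanSpace ℝ (Fin n) → ℝ)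
    (htau : tau = fun x y => Real.log (1 + ⨆ p : frontier (Metric.ball (0 : EuclideanSpace ℝ (Fin n)) 1),
      dist x y / Real.sqrt (dist x (p : EuclideanSpace ℝ (Fin n)) * dist (p : EuclideanSpace ℝ (Fin n)) y)))
    (hu : u = fun x y => 2 * Real.log ((dist x y + max (1 - ‖x‖) (1 - ‖y‖)) / Real.sqrt ((1 - ‖x‖) * (1 - ‖y‖))))
    (v : EuclideanSpace ℝ (Fin n)) (hv : ‖v‖ = 1) :
    (∀ r : ℝ, 0 < r → r < 1 →
      u (r • v) (-(r • v)) = 2 * Real.log ((1 + r) / (1 - r)) ∧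
      tau (r • v) (-(r • v)) = Real.log (1 + 2 * r / Real.sqrt (1 - r^2))) ∧
    Tendsto (fun r : ℝ => u (r • v) (-(r • v)) / (4 * tau (r • v) (-(r • v))))
      (nhdsWithin 1 (Set.Iio 1)) (nhds 1) := by
  subst htau hu
  haveI : Nontrivial (EuclideanSpace ℝ (Fin n)) :=
    nontrivial_of_ne v 0 (fun h => by simp [h] at hv)
  have hfr : frontier (Metric.ball (0 : EuclideanSpace ℝ (Fin n)) 1)
      = Metric.sphere (0 : EuclideanSpace ℝ (Fin n)) 1 := frontier_ball 0 one_ne_zero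
  have key : ∀ r : ℝ, 0 < r → r < 1 →
      (2 * Real.log ((dist (r • v) (-(r • v)) + max (1 - ‖r • v‖) (1 - ‖-(r • v)‖)) /
        Real.sqrt ((1 - ‖r • v‖) * (1 - ‖-(r • v)‖))) = 2 * Real.log ((1 + r) / (1 - r))) ∧
      (Real.log (1 + ⨆ p : frontier (Metric.ball (0 : EuclideanSpace ℝ (Fin n)) 1),
        dist (r • v) (-(r • v)) / Real.sqrt (dist (r • v) (p : EuclideanSpace ℝ (Fin n)) *
          dist (p : EuclideanSpace ℝ (Fin n)) (-(r • v))))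
        = Real.log (1 + 2 * r / Real.sqrt (1 - r^2))) := by
    intro r h0 h1
    have hnrm : ‖r • v‖ = r := by
      rw [norm_smul, hv, mul_one, Real.norm_eq_abs, abs_of_pos h0]
    constructor
    · rw [norm_neg, hnrm, max_self, dist_anti v hv h0,
        Real.sqrt_mul_self (by linarith : (0:ℝ) ≤ 1 - r),
        show 2 * r + (1 - r) = 1 + r by ring]
    · rw [hfr, sup_eq v hv h0 h1]
  constructor
  · exact fun r h0 h1 => key r h0 h1
  · apply lim_aux.congr'
    have hmem : Set.Ioo (1/2 : ℝ) 1 ∈ nhdsWithin (1:ℝ) (Set.Iio 1) :=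
      Filter.inter_mem (mem_nhdsWithin_of_mem_nhds (Ioi_mem_nhds (by norm_num)))
        self_mem_nhdsWithin
    filter_upwards [hmem] with r hr
    obtain ⟨h0', h1'⟩ := hr
    have h0 : (0:ℝ) < r := by linarith
    obtain ⟨e1, e2⟩ := key r h0 h1'
    simp only [e1, e2]
end

section
/- For any domain D ⊊ ℝⁿ and x, y ∈ D, j̃_D(x,y) ≤ u_D(x,y) ≤ 4·j̃_D(x,y), and the first inequality is sharp. -/
open Metric Real

/-- Distance to the boundary. -/
noncomputable def bdist {n : ℕ} (D : Set (EuclideanSpace ℝ (Fin n)))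
    (x : EuclideanSpace ℝ (Fin n)) : ℝ :=
  Metric.infDist x (frontier D)

/-- The distance ratio metric `j̃_D(x,y) = log(1 + |x−y|/min{d(x),d(y)})`. -/
noncomputable def jtil {n : ℕ} (D : Set (EuclideanSpace ℝ (Fin n)))
    (x y : EuclideanSpace ℝ (Fin n)) : ℝ :=
  Real.log (1 + dist x y / min (bdist D x) (bdist D y))

/-- Ibragimov's metric `u_D(x,y) = 2 log((|x−y| + max{d(x),d(y)})/√(d(x)d(y)))`. -/
noncomputable def uu {n : ℕ} (D : Set (EuclideanSpace ℝ (Fin n)))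
    (x y : EuclideanSpace ℝ (Fin n)) : ℝ :=
  2 * Real.log ((dist x y + max (bdist D x) (bdist D y)) / Real.sqrt (bdist D x * bdist D y))

/-- If `D` is open, nonempty and proper, the distance to the boundary is positive on `D`. -/
lemma bdist_pos {n : ℕ} {D : Set (EuclideanSpace ℝ (Fin n))}
    (hDopen : IsOpen D) (hne : D.Nonempty) (hDproper : D ≠ Set.univ)
    {x : EuclideanSpace ℝ (Fin n)} (hx : x ∈ D) : 0 < bdist D x := by
  have hfr : (frontier D).Nonempty := by
    rw [nonempty_frontier_iff]
    exact ⟨hne, hDproper⟩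
  refine (isClosed_frontier.notMem_iff_infDist_pos hfr).mp ?_
  intro h
  rw [frontier, hDopen.interior_eq] at h
  exact h.2 hx

/-- The key algebraic inequality for `u ≤ 4 j̃`. -/
lemma key_ineq (m M r : ℝ) (hm : 0 < m) (hmM : m ≤ M) (hr : 0 ≤ r) (hMm : M ≤ m + r) :
    (r + M) ^ 2 * m ^ 4 ≤ (m + r) ^ 4 * (m * M) := by
  have hM : 0 < M := lt_of_lt_of_le hm hmM
  have h1 : (r + M) ^ 2 ≤ (m + 2 * r) ^ 2 := by nlinarith
  have h2 : (m * (m + 2 * r)) ^ 2 ≤ ((m + r) ^ 2) ^ 2 := by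
    nlinarith [sq_nonneg r, sq_nonneg (m * r), sq_nonneg (r * r), mul_pos hm hm,
      mul_nonneg (mul_nonneg hm.le hm.le) hr, mul_nonneg (mul_nonneg hm.le hr) hr]
  have h3 : m ^ 2 ≤ m * M := by nlinarith
  calc (r + M) ^ 2 * m ^ 4 ≤ (m + 2 * r) ^ 2 * m ^ 4 := by nlinarith [pow_pos hm 4]
  _ = (m * (m + 2 * r)) ^ 2 * m ^ 2 := by ring
  _ ≤ ((m + r) ^ 2) ^ 2 * m ^ 2 := by nlinarith [pow_pos hm 2]
  _ = (m + r) ^ 4 * m ^ 2 := by ring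
  _ ≤ (m + r) ^ 4 * (m * M) := by nlinarith [pow_pos (by linarith : (0:ℝ) < m + r) 4]

/-- For any proper subdomain `D ⊊ ℝⁿ` and `x, y ∈ D`,
`j̃_D(x,y) ≤ u_D(x,y) ≤ 4 j̃_D(x,y)`, and the first inequality is sharp:
the constant `1` cannot be increased, over all domains (in all dimensions). -/
theorem stmt12 {n : ℕ} (D : Set (EuclideanSpace ℝ (Fin n)))
    (hDopen : IsOpen D) (hDconn : IsConnected D) (hDproper : D ≠ Set.univ)
    (x y : EuclideanSpace ℝ (Fin n)) (hx : x ∈ D) (hy : y ∈ D) :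
    (jtil D x y ≤ uu D x y ∧ uu D x y ≤ 4 * jtil D x y) ∧
    (∀ ε > 0, ∃ (m : ℕ) (D' : Set (EuclideanSpace ℝ (Fin m))),
      IsOpen D' ∧ IsConnected D' ∧ D' ≠ Set.univ ∧
      ∃ x' ∈ D', ∃ y' ∈ D', 0 < uu D' x' y' ∧ uu D' x' y' < (1 + ε) * jtil D' x' y') := by
  constructor
  · -- main inequalities
    have hdx : 0 < bdist D x := bdist_pos hDopen hDconn.nonempty hDproper hx
    have hdy : 0 < bdist D y := bdist_pos hDopen hDconn.nonempty hDproper hy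
    set m := min (bdist D x) (bdist D y) with hm_def
    set M := max (bdist D x) (bdist D y) with hM_def
    set r := dist x y with hr_def
    have hm : 0 < m := lt_min hdx hdy
    have hmM : m ≤ M := min_le_max
    have hr : 0 ≤ r := dist_nonneg
    have hMm : M ≤ m + r := by
      rcases le_total (bdist D x) (bdist D y) with h | h
      · rw [hM_def, max_eq_right h, hm_def, min_eq_left h]
        calc bdist D y ≤ bdist D x + dist y x := Metric.infDist_le_infDist_add_dist
        _ = bdist D x + r := by rw [dist_comm]
      · rw [hM_def, max_eq_left h, hm_def, min_eq_right h]
        exact Metric.infDist_le_infDist_add_dist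
    have hprod : bdist D x * bdist D y = m * M := (min_mul_max _ _).symm
    have hM : 0 < M := lt_of_lt_of_le hm hmM
    have hj : jtil D x y = Real.log ((m + r) / m) := by
      rw [jtil]
      congr 1
      rw [add_div, div_self hm.ne']
    have hsq : ((r + M) / Real.sqrt (m * M)) ^ 2 = (r + M) ^ 2 / (m * M) := by
      rw [div_pow, Real.sq_sqrt (by positivity)]
    have hu : uu D x y = Real.log ((r + M) ^ 2 / (m * M)) := by
      rw [uu, hprod, ← hsq, Real.log_pow]
      push_cast
      ring
    constructor
    · rw [hj, hu]
      apply Real.log_le_log (by positivity)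
      rw [div_le_div_iff₀ hm (by positivity)]
      nlinarith [mul_nonneg hr hM.le, mul_nonneg hr hr, mul_nonneg (mul_nonneg hr hr) hm.le,
        mul_nonneg (mul_nonneg hr hM.le) hm.le, mul_le_mul_of_nonneg_left hmM hM.le]
    · rw [hj, hu, show (4 : ℝ) * Real.log ((m + r) / m) = Real.log (((m + r) / m) ^ 4) by
        rw [Real.log_pow]; push_cast; ring]
      apply Real.log_le_log (by positivity)
      rw [div_pow, div_le_div_iff₀ (by positivity) (by positivity)]
      exact key_ineq m M r hm hmM hr hMm
  · -- sharpness
    intro ε hε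
    set f : EuclideanSpace ℝ (Fin 1) →L[ℝ] ℝ := EuclideanSpace.proj 0 with hf_def
    have hfs : ∀ c : ℝ, f (EuclideanSpace.single 0 c) = c := fun c => by
      simp [hf_def, EuclideanSpace.single_apply]
    have hsurj : Function.Surjective f := fun c => ⟨EuclideanSpace.single 0 c, hfs c⟩
    have hopen : IsOpenMap f := f.isOpenMap hsurj
    set t : ℝ := Real.exp (3 / ε) + 2 with ht_def
    have hexp_le : Real.exp (3 / ε) ≤ t := by rw [ht_def]; linarith
    have ht2 : 2 < t := by
      have := Real.exp_pos (3 / ε); rw [ht_def]; linarith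
    clear_value t
    have ht1 : 1 < t := by linarith
    have ht0 : 0 < t := by linarith
    refine ⟨1, f ⁻¹' Set.Ioi 0, isOpen_Ioi.preimage f.continuous, ?_, ?_,
      EuclideanSpace.single 0 1, by simpa [hfs] using one_pos,
      EuclideanSpace.single 0 t, by simpa [hfs] using ht0, ?_⟩
    · exact ⟨⟨EuclideanSpace.single 0 1, by simpa [hfs] using one_pos⟩,
        ((convex_Ioi (0:ℝ)).linear_preimage (f : EuclideanSpace ℝ (Fin 1) →ₗ[ℝ] ℝ)).isPreconnected⟩
    · intro h
      have : (0 : EuclideanSpace ℝ (Fin 1)) ∈ f ⁻¹' Set.Ioi 0 := h ▸ Set.mem_univ _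
      simp at this
    · -- the numerical part
      have hfront : frontier (f ⁻¹' Set.Ioi 0) = {(0 : EuclideanSpace ℝ (Fin 1))} := by
        rw [← hopen.preimage_frontier_eq_frontier_preimage f.continuous, frontier_Ioi]
        ext v
        constructor
        · intro hv
          have hv' : f v = 0 := hv
          have : v = EuclideanSpace.single 0 (f v) := by
            ext i
            have : i = 0 := Subsingleton.elim _ _
            subst this
            simp [hf_def, EuclideanSpace.single_apply]
          rw [Set.mem_singleton_iff, this, hv']
          ext i
          simp [EuclideanSpace.single_apply]
        · intro hv
          rw [Set.mem_singleton_iff] at hv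
          subst hv
          simp
      have hb : ∀ c : ℝ, bdist (f ⁻¹' Set.Ioi 0) (EuclideanSpace.single (0 : Fin 1) c) = |c| :=
        fun c => by
        rw [bdist, hfront, Metric.infDist_singleton, dist_zero_right, EuclideanSpace.norm_single,
          Real.norm_eq_abs]
      have hb1 : bdist (f ⁻¹' Set.Ioi 0) (EuclideanSpace.single (0 : Fin 1) (1:ℝ)) = 1 := by
        rw [hb]; norm_num
      have hbt : bdist (f ⁻¹' Set.Ioi 0) (EuclideanSpace.single (0 : Fin 1) t) = t := by
        rw [hb, abs_of_pos ht0]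
      have hdist : dist (EuclideanSpace.single (0 : Fin 1) (1:ℝ))
          (EuclideanSpace.single (0 : Fin 1) t) = t - 1 := by
        rw [EuclideanSpace.dist_single_same, Real.dist_eq, abs_of_nonpos (by linarith)]
        ring
      have hmin : min (1:ℝ) t = 1 := min_eq_left ht1.le
      have hmax : max (1:ℝ) t = t := max_eq_right ht1.le
      have hj : jtil (f ⁻¹' Set.Ioi 0) (EuclideanSpace.single (0 : Fin 1) 1)
          (EuclideanSpace.single (0 : Fin 1) t) = Real.log t := by
        rw [jtil, hb1, hbt, hdist, hmin]
        norm_num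
      have hu : uu (f ⁻¹' Set.Ioi 0) (EuclideanSpace.single (0 : Fin 1) 1)
          (EuclideanSpace.single (0 : Fin 1) t)
          = 2 * Real.log (2 * t - 1) - Real.log t := by
        rw [uu, hb1, hbt, hdist, hmax, one_mul]
        rw [Real.log_div (by linarith) (Real.sqrt_ne_zero'.mpr ht0), Real.log_sqrt ht0.le]
        ring_nf
      rw [hj, hu]
      clear hj hu hb hb1 hbt hdist hfront hfs hsurj hopen hmin hmax
      have hlogt : 0 < Real.log t := Real.log_pos ht1
      have hεlogt : 3 ≤ ε * Real.log t := by
        have : 3 / ε ≤ Real.log t := by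
          rw [Real.le_log_iff_exp_le ht0]
          exact hexp_le
        calc (3:ℝ) = ε * (3 / ε) := by field_simp
        _ ≤ ε * Real.log t := by nlinarith
      have hlog2 : Real.log 2 < 1 := by
        have := Real.log_lt_sub_one_of_pos (by norm_num : (0:ℝ) < 2) (by norm_num)
        linarith
      have hlt : Real.log (2 * t - 1) < Real.log (2 * t) :=
        Real.log_lt_log (by linarith) (by linarith)
      have hlog2t : Real.log (2 * t) = Real.log 2 + Real.log t :=
        Real.log_mul (by norm_num) ht0.ne'
      constructor
      · have h1 : 1 < (2 * t - 1) := by linarith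
        have : Real.log t < Real.log (2 * t - 1) := Real.log_lt_log ht0 (by linarith)
        linarith
      · have : 2 * Real.log (2 * t - 1) - Real.log t < 2 * Real.log 2 + Real.log t := by
          rw [hlog2t] at hlt; linarith
        have h2 : 2 * Real.log 2 + Real.log t < (1 + ε) * Real.log t := by
          have hexp : (1 + ε) * Real.log t = Real.log t + ε * Real.log t := by ring
          rw [hexp]
          linarith
        linarith
end

section
/- For any domain D ⊊ ℝⁿ and x, y ∈ D, τ̃_D(x,y) ≥ (log 3)·s_D(x,y), and equality holds when D = ℝⁿ \ {0} and y = −x. -/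
open Metric Real

/-- Bernoulli-type inequality: for `t ∈ [0,1]`, `log 3 · t ≤ log (1 + 2t)`,
by concavity of `log`. -/
lemma stmt17_bern {t : ℝ} (h0 : 0 ≤ t) (h1 : t ≤ 1) :
    Real.log 3 * t ≤ Real.log (1 + 2 * t) := by
  have hc := strictConcaveOn_log_Ioi.concaveOn.2 (x := 1) (y := 3)
    (by norm_num : (1:ℝ) ∈ Set.Ioi 0) (by norm_num : (3:ℝ) ∈ Set.Ioi 0)
    (by linarith : (0:ℝ) ≤ 1 - t) h0 (by ring)
  simp only [smul_eq_mul, Real.log_one, mul_one] at hc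
  calc Real.log 3 * t = (1 - t) * 0 + t * Real.log 3 := by ring
    _ ≤ Real.log ((1 - t) * 1 + t * 3) := by simpa using hc
    _ = Real.log (1 + 2 * t) := by ring_nf

/-- For any proper subdomain `D ⊊ ℝⁿ` and `x, y ∈ D`, the scale-invariant Cassinian
metric `τ̃_D(x,y) = log(1 + sup_{p ∈ ∂D} |x−y|/√(|x−p||p−y|))` and the triangular
ratio metric `s_D(x,y) = sup_{p ∈ ∂D} |x−y|/(|x−p|+|p−y|)` satisfy
`τ̃_D(x,y) ≥ (log 3)·s_D(x,y)`, with equality in `D = ℝⁿ∖{0}` at `y = −x`. -/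
theorem stmt17 {n : ℕ} (D : Set (EuclideanSpace ℝ (Fin n)))
    (hDopen : IsOpen D) (hDconn : IsConnected D) (hDproper : D ≠ Set.univ)
    (tau s : _)
    (htau : tau = fun x y => Real.log (1 + ⨆ p : frontier D,
      dist x y / Real.sqrt (dist x (p : EuclideanSpace ℝ (Fin n)) * dist (p : EuclideanSpace ℝ (Fin n)) y)))
    (hs : s = fun x y => ⨆ p : frontier D,
      dist x y / (dist x (p : EuclideanSpace ℝ (Fin n)) + dist (p : EuclideanSpace ℝ (Fin n)) y))
    (x y : EuclideanSpace ℝ (Fin n)) (hx : x ∈ D) (hy : y ∈ D) :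
    Real.log 3 * s x y ≤ tau x y ∧
    (D = {(0 : EuclideanSpace ℝ (Fin n))}ᶜ → y = -x → x ≠ 0 →
      tau x y = Real.log 3 * s x y) := by
  subst htau hs
  beta_reduce
  -- the frontier is nonempty
  have hfne : (frontier D).Nonempty := by
    by_contra h
    rw [Set.not_nonempty_iff_eq_empty] at h
    have hclopen : IsClopen D := isClopen_iff_frontier_eq_empty.mpr h
    rcases isClopen_iff.mp hclopen with h' | h'
    · exact absurd h' (Set.nonempty_iff_ne_empty.mp hDconn.nonempty)
    · exact hDproper h'
  haveI : Nonempty (frontier D) := hfne.to_subtype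
  -- points of D are away from the frontier
  have hdistpos : ∀ z ∈ D, 0 < infDist z (frontier D) := by
    intro z hz
    refine (isClosed_frontier.notMem_iff_infDist_pos hfne).mp ?_
    intro hzf
    rw [hDopen.frontier_eq] at hzf
    exact hzf.2 hz
  have hxfd := hdistpos x hx
  have hyfd := hdistpos y hy
  have hdxp : ∀ p : frontier D, infDist x (frontier D) ≤ dist x (p : EuclideanSpace ℝ (Fin n)) :=
    fun p => infDist_le_dist_of_mem p.2
  have hdyp : ∀ p : frontier D, infDist y (frontier D) ≤ dist (p : EuclideanSpace ℝ (Fin n)) y :=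
    fun p => by rw [dist_comm]; exact infDist_le_dist_of_mem p.2
  have hpxpos : ∀ p : frontier D, 0 < dist x (p : EuclideanSpace ℝ (Fin n)) :=
    fun p => lt_of_lt_of_le hxfd (hdxp p)
  have hpypos : ∀ p : frontier D, 0 < dist (p : EuclideanSpace ℝ (Fin n)) y :=
    fun p => lt_of_lt_of_le hyfd (hdyp p)
  -- boundedness of the Cassinian family
  have hbdd : BddAbove (Set.range fun p : frontier D =>
      dist x y / Real.sqrt (dist x (p : EuclideanSpace ℝ (Fin n)) *
        dist (p : EuclideanSpace ℝ (Fin n)) y)) := by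
    refine ⟨dist x y / Real.sqrt (infDist x (frontier D) * infDist y (frontier D)), ?_⟩
    rintro _ ⟨p, rfl⟩
    have h1 : Real.sqrt (infDist x (frontier D) * infDist y (frontier D)) ≤
        Real.sqrt (dist x (p : EuclideanSpace ℝ (Fin n)) *
          dist (p : EuclideanSpace ℝ (Fin n)) y) :=
      Real.sqrt_le_sqrt (mul_le_mul (hdxp p) (hdyp p) hyfd.le (hpxpos p).le)
    have h2 : 0 < Real.sqrt (infDist x (frontier D) * infDist y (frontier D)) :=
      Real.sqrt_pos.mpr (mul_pos hxfd hyfd)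
    exact div_le_div_of_nonneg_left dist_nonneg h2 h1
  -- main pointwise estimate
  have hkey : ∀ p : frontier D,
      Real.log 3 * (dist x y / (dist x (p : EuclideanSpace ℝ (Fin n)) +
        dist (p : EuclideanSpace ℝ (Fin n)) y)) ≤
      Real.log (1 + ⨆ q : frontier D,
        dist x y / Real.sqrt (dist x (q : EuclideanSpace ℝ (Fin n)) *
          dist (q : EuclideanSpace ℝ (Fin n)) y)) := by
    intro p
    set a := dist x (p : EuclideanSpace ℝ (Fin n)) with ha_def
    set b := dist (p : EuclideanSpace ℝ (Fin n)) y with hb_def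
    set d := dist x y with hd_def
    have ha := hpxpos p
    have hb := hpypos p
    have habpos : 0 < a + b := by linarith
    have ht0 : 0 ≤ d / (a + b) := div_nonneg dist_nonneg habpos.le
    have ht1 : d / (a + b) ≤ 1 := by
      rw [div_le_one habpos]; exact dist_triangle x _ y
    have hsqrtpos : 0 < Real.sqrt (a * b) := Real.sqrt_pos.mpr (mul_pos ha hb)
    have hsqrt_le : Real.sqrt (a * b) ≤ (a + b) / 2 := by
      rw [show (a + b) / 2 = Real.sqrt (((a + b) / 2) ^ 2) from
        (Real.sqrt_sq (by linarith)).symm]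
      exact Real.sqrt_le_sqrt (by nlinarith [sq_nonneg (a - b)])
    have hstep1 : 2 * (d / (a + b)) ≤ d / Real.sqrt (a * b) := by
      have h := div_le_div_of_nonneg_left (dist_nonneg : (0:ℝ) ≤ d) hsqrtpos hsqrt_le
      calc 2 * (d / (a + b)) = d / ((a + b) / 2) := by field_simp
        _ ≤ d / Real.sqrt (a * b) := h
    have hle_sup : d / Real.sqrt (a * b) ≤ ⨆ q : frontier D,
        dist x y / Real.sqrt (dist x (q : EuclideanSpace ℝ (Fin n)) *
          dist (q : EuclideanSpace ℝ (Fin n)) y) := le_ciSup hbdd p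
    have hsupnn : 0 ≤ d / Real.sqrt (a * b) := div_nonneg dist_nonneg hsqrtpos.le
    calc Real.log 3 * (d / (a + b)) ≤ Real.log (1 + 2 * (d / (a + b))) := stmt17_bern ht0 ht1
      _ ≤ Real.log (1 + ⨆ q : frontier D,
          dist x y / Real.sqrt (dist x (q : EuclideanSpace ℝ (Fin n)) *
            dist (q : EuclideanSpace ℝ (Fin n)) y)) := by
          apply Real.log_le_log (by linarith)
          linarith
  have hlog3 : 0 < Real.log 3 := Real.log_pos (by norm_num)
  have hmain : Real.log 3 * (⨆ p : frontier D,
      dist x y / (dist x (p : EuclideanSpace ℝ (Fin n)) +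
        dist (p : EuclideanSpace ℝ (Fin n)) y)) ≤
      Real.log (1 + ⨆ p : frontier D,
        dist x y / Real.sqrt (dist x (p : EuclideanSpace ℝ (Fin n)) *
          dist (p : EuclideanSpace ℝ (Fin n)) y)) := by
    rw [mul_comm, ← le_div_iff₀ hlog3]
    refine ciSup_le fun p => ?_
    rw [le_div_iff₀ hlog3, mul_comm]
    exact hkey p
  refine ⟨hmain, ?_⟩
  -- equality case
  intro hD hyx hx0
  subst hD hyx
  -- n ≠ 0
  rcases Nat.eq_zero_or_pos n with hn | hn
  · exfalso
    subst hn
    exact hx0 (Subsingleton.elim x 0)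
  -- the space is nontrivial, so frontier {0}ᶜ = {0}
  haveI : Nontrivial (EuclideanSpace ℝ (Fin n)) := ⟨x, 0, hx0⟩
  have hfront : frontier ({(0 : EuclideanSpace ℝ (Fin n))}ᶜ) = {0} := by
    rw [frontier_compl, isClosed_singleton.frontier_eq, interior_singleton, Set.diff_empty]
  have hnxpos : 0 < ‖x‖ := norm_pos_iff.mpr hx0
  have hdxy : dist x (-x) = 2 * ‖x‖ := by
    rw [dist_eq_norm, sub_neg_eq_add, ← two_smul ℝ x, norm_smul]
    simp
  have htauval : (⨆ p : frontier ({(0 : EuclideanSpace ℝ (Fin n))}ᶜ),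
      dist x (-x) / Real.sqrt (dist x (p : EuclideanSpace ℝ (Fin n)) *
        dist (p : EuclideanSpace ℝ (Fin n)) (-x))) = 2 := by
    rw [hfront]
    haveI : Unique ({(0 : EuclideanSpace ℝ (Fin n))} : Set (EuclideanSpace ℝ (Fin n))) :=
      Set.uniqueSingleton 0
    rw [ciSup_unique]
    have hdef : ((default : ({(0 : EuclideanSpace ℝ (Fin n))} :
        Set (EuclideanSpace ℝ (Fin n)))) : EuclideanSpace ℝ (Fin n)) = 0 :=
      (default : ({(0 : EuclideanSpace ℝ (Fin n))} : Set (EuclideanSpace ℝ (Fin n)))).2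
    rw [hdef, hdxy, dist_zero_left, dist_zero_right, norm_neg,
      Real.sqrt_mul_self (norm_nonneg x)]
    field_simp
  have hsval : (⨆ p : frontier ({(0 : EuclideanSpace ℝ (Fin n))}ᶜ),
      dist x (-x) / (dist x (p : EuclideanSpace ℝ (Fin n)) +
        dist (p : EuclideanSpace ℝ (Fin n)) (-x))) = 1 := by
    rw [hfront]
    haveI : Unique ({(0 : EuclideanSpace ℝ (Fin n))} : Set (EuclideanSpace ℝ (Fin n))) :=
      Set.uniqueSingleton 0
    rw [ciSup_unique]
    have hdef : ((default : ({(0 : EuclideanSpace ℝ (Fin n))} :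
        Set (EuclideanSpace ℝ (Fin n)))) : EuclideanSpace ℝ (Fin n)) = 0 :=
      (default : ({(0 : EuclideanSpace ℝ (Fin n))} : Set (EuclideanSpace ℝ (Fin n)))).2
    rw [hdef, hdxy, dist_zero_left, dist_zero_right, norm_neg]
    rw [div_eq_one_iff_eq (by positivity)]
    ring
  rw [htauval, hsval]
  norm_num
end

section
/- For any domain D ⊊ ℝⁿ and x, y ∈ D, s_D(x,y) ≤ u_D(x,y)/log 9. -/
open Metric Real

theorem aux_log_one_add_two_mul {t : ℝ} (h0 : 0 ≤ t) (h1 : t ≤ 1) :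
    t * Real.log 3 ≤ Real.log (1 + 2 * t) := by
  have hc := strictConcaveOn_log_Ioi.concaveOn.2 (Set.mem_Ioi.mpr one_pos)
    (Set.mem_Ioi.mpr (by norm_num : (0:ℝ) < 3)) (by linarith : (0:ℝ) ≤ 1 - t) h0 (by ring)
  simp only [smul_eq_mul, Real.log_one, mul_zero, zero_add, mul_one] at hc
  calc t * Real.log 3 ≤ Real.log (1 - t + t * 3) := hc
    _ = Real.log (1 + 2 * t) := by ring_nf

/-- For any proper subdomain `D ⊊ ℝⁿ` and `x, y ∈ D`, the triangular ratio metric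
`s_D(x,y) = sup_{p ∈ ∂D} |x−y|/(|x−p|+|p−y|)` and
`u_D(x,y) = 2 log((|x−y| + max{d(x),d(y)})/√(d(x)d(y)))` satisfy
`s_D(x,y) ≤ u_D(x,y)/log 9`. -/
theorem stmt18 {n : ℕ} (D : Set (EuclideanSpace ℝ (Fin n)))
    (hDopen : IsOpen D) (hDconn : IsConnected D) (hDproper : D ≠ Set.univ)
    (d s u : _)
    (hd : d = fun x => Metric.infDist x (frontier D))
    (hs : s = fun x y => ⨆ p : frontier D,
      dist x y / (dist x (p : EuclideanSpace ℝ (Fin n)) + dist (p : EuclideanSpace ℝ (Fin n)) y))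
    (hu : u = fun x y => 2 * Real.log ((dist x y + max (d x) (d y)) / Real.sqrt (d x * d y)))
    (x y : EuclideanSpace ℝ (Fin n)) (hx : x ∈ D) (hy : y ∈ D) :
    s x y ≤ u x y / Real.log 9 := by
  subst hd hs hu
  have hne : (frontier D).Nonempty := by
    by_contra h
    rw [Set.not_nonempty_iff_eq_empty] at h
    have hcl : IsClopen D := isClopen_iff_frontier_eq_empty.mpr h
    rcases isClopen_iff.mp hcl with h1 | h1
    · exact hDconn.nonempty.ne_empty h1
    · exact hDproper h1
  haveI : Nonempty (frontier D) := hne.to_subtype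
  set dx := infDist x (frontier D) with hdxdef
  set dy := infDist y (frontier D) with hdydef
  have hxf : x ∉ frontier D := fun h => (hDopen.frontier_eq ▸ h).2 hx
  have hyf : y ∉ frontier D := fun h => (hDopen.frontier_eq ▸ h).2 hy
  have hdx : 0 < dx := (isClosed_frontier.notMem_iff_infDist_pos hne).1 hxf
  have hdy : 0 < dy := (isClosed_frontier.notMem_iff_infDist_pos hne).1 hyf
  have hr : 0 ≤ dist x y := dist_nonneg
  have hdsum : 0 < dx + dy := by linarith
  set t := min 1 (dist x y / (dx + dy)) with htdef
  have ht0 : 0 ≤ t := le_min zero_le_one (by positivity)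
  have ht1 : t ≤ 1 := min_le_left _ _
  have htr : t * (dx + dy) ≤ dist x y := by
    rw [← le_div_iff₀ hdsum]
    exact min_le_right _ _
  have hstep : (⨆ p : frontier D,
      dist x y / (dist x (p : EuclideanSpace ℝ (Fin n)) + dist (p : EuclideanSpace ℝ (Fin n)) y)) ≤ t := by
    apply ciSup_le
    intro p
    have hpx : dx ≤ dist x (p : EuclideanSpace ℝ (Fin n)) := infDist_le_dist_of_mem p.2
    have hpy : dy ≤ dist y (p : EuclideanSpace ℝ (Fin n)) := infDist_le_dist_of_mem p.2
    have hpy' : dy ≤ dist (p : EuclideanSpace ℝ (Fin n)) y := by rwa [dist_comm] at hpy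
    have hden : 0 < dist x (p : EuclideanSpace ℝ (Fin n)) + dist (p : EuclideanSpace ℝ (Fin n)) y := by
      linarith
    refine le_min ?_ ?_
    · rw [div_le_one hden]
      exact dist_triangle x _ y
    · apply div_le_div_of_nonneg_left hr hdsum
      linarith
  refine hstep.trans ?_
  -- now show t ≤ u / log 9
  set a := Real.sqrt (dx * dy) with hadef
  have ha : 0 < a := Real.sqrt_pos.mpr (by positivity)
  have hM : a ≤ max dx dy := by
    have : dx * dy ≤ max dx dy * max dx dy := by
      rcases le_total dx dy with h | h
      · rw [max_eq_right h]; nlinarith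
      · rw [max_eq_left h]; nlinarith
    calc a ≤ Real.sqrt (max dx dy * max dx dy) := Real.sqrt_le_sqrt this
      _ = max dx dy := Real.sqrt_mul_self (le_max_of_le_left hdx.le)
  have h2a : 2 * a ≤ dx + dy := by
    have h1 : a * a = dx * dy := Real.mul_self_sqrt (by positivity)
    nlinarith [sq_nonneg (Real.sqrt dx - Real.sqrt dy), Real.sq_sqrt hdx.le, Real.sq_sqrt hdy.le,
      Real.sqrt_mul_self (mul_nonneg hdx.le hdy.le), sq_nonneg (dx - dy), h1, sq_nonneg (dx + dy - 2*a)]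
  have hQ : 1 + 2 * t ≤ (dist x y + max dx dy) / a := by
    rw [le_div_iff₀ ha]
    have h2ta : 2 * t * a ≤ dist x y := by
      calc 2 * t * a = t * (2 * a) := by ring
        _ ≤ t * (dx + dy) := by
            apply mul_le_mul_of_nonneg_left h2a ht0
        _ ≤ dist x y := htr
    nlinarith [hM, h2ta, ha]
  have hlog9 : Real.log 9 = 2 * Real.log 3 := by
    rw [show (9:ℝ) = 3 ^ 2 by norm_num, Real.log_pow]
    push_cast; ring
  have hlog9pos : 0 < Real.log 9 := Real.log_pos (by norm_num)
  rw [le_div_iff₀ hlog9pos]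
  have hlogmono : Real.log (1 + 2 * t) ≤ Real.log ((dist x y + max dx dy) / a) :=
    Real.log_le_log (by linarith) hQ
  have := aux_log_one_add_two_mul ht0 ht1
  rw [hlog9]
  nlinarith [this, hlogmono]
end

section
/- For any domain D ⊊ ℝⁿ and x, y ∈ D, η_D(x,y) ≤ u_D(x,y) ≤ 4·log(2 + e^{η_D(x,y)}). -/
set_option maxHeartbeats 1000000


open Metric Real

/-- For any proper subdomain `D ⊊ ℝⁿ` and `x, y ∈ D`, the half-Apollonian metric
`η_D(x,y) = sup_{p ∈ ∂D} |log(|x−p|/|y−p|)|` and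
`u_D(x,y) = 2 log((|x−y| + max{d(x),d(y)})/√(d(x)d(y)))` satisfy
`η_D(x,y) ≤ u_D(x,y) ≤ 4 log(2 + e^{η_D(x,y)})`. -/
theorem stmt19 {n : ℕ} (D : Set (EuclideanSpace ℝ (Fin n)))
    (hDopen : IsOpen D) (hDconn : IsConnected D) (hDproper : D ≠ Set.univ)
    (d eta u : _)
    (hd : d = fun x => Metric.infDist x (frontier D))
    (heta : eta = fun x y => ⨆ p : frontier D,
      |Real.log (dist x (p : EuclideanSpace ℝ (Fin n)) / dist y (p : EuclideanSpace ℝ (Fin n)))|)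
    (hu : u = fun x y => 2 * Real.log ((dist x y + max (d x) (d y)) / Real.sqrt (d x * d y)))
    (x y : EuclideanSpace ℝ (Fin n)) (hx : x ∈ D) (hy : y ∈ D) :
    eta x y ≤ u x y ∧ u x y ≤ 4 * Real.log (2 + Real.exp (eta x y)) := by
  simp only [heta, hu, hd]
  clear hd heta hu
  have hFc : IsClosed (frontier D) := isClosed_frontier
  have hFne : (frontier D).Nonempty := by
    rw [Set.nonempty_iff_ne_empty]
    intro h0
    rcases frontier_eq_empty_iff.mp h0 with h | h
    · exact (Set.nonempty_iff_ne_empty.mp ⟨x, hx⟩) h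
    · exact hDproper h
  haveI : Nonempty (frontier D) := hFne.to_subtype
  have hxF : x ∉ frontier D := by
    rw [hDopen.frontier_eq]; exact fun h => h.2 hx
  have hyF : y ∉ frontier D := by
    rw [hDopen.frontier_eq]; exact fun h => h.2 hy
  set dx := infDist x (frontier D) with hdxdef
  set dy := infDist y (frontier D) with hdydef
  have hdx : 0 < dx := (hFc.notMem_iff_infDist_pos hFne).mp hxF
  have hdy : 0 < dy := (hFc.notMem_iff_infDist_pos hFne).mp hyF
  set t := dist x y with ht
  set M := max dx dy with hM
  have hMx : dx ≤ M := le_max_left _ _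
  have hMy : dy ≤ M := le_max_right _ _
  have hMpos : 0 < M := lt_of_lt_of_le hdx hMx
  have hSpos : 0 < Real.sqrt (dx * dy) := Real.sqrt_pos.mpr (by positivity)
  have hS2 : Real.sqrt (dx * dy) ^ 2 = dx * dy := Real.sq_sqrt (by positivity)
  have ht0 : 0 ≤ t := dist_nonneg
  have htM : 0 < t + M := by linarith
  have hU : 2 * Real.log ((t + M) / Real.sqrt (dx * dy))
      = Real.log ((t + M) ^ 2 / (dx * dy)) := by
    rw [Real.log_div htM.ne' hSpos.ne', Real.log_div (by positivity) (by positivity),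
      Real.log_sqrt (by positivity), Real.log_pow]
    push_cast; ring
  have key : ∀ p : frontier D,
      |Real.log (dist x (p : EuclideanSpace ℝ (Fin n)) / dist y (p : EuclideanSpace ℝ (Fin n)))|
      ≤ 2 * Real.log ((t + M) / Real.sqrt (dx * dy)) := by
    rintro ⟨p, hp⟩
    have hxp : dx ≤ dist x p := infDist_le_dist_of_mem hp
    have hyp : dy ≤ dist y p := infDist_le_dist_of_mem hp
    have hxp0 : 0 < dist x p := lt_of_lt_of_le hdx hxp
    have hyp0 : 0 < dist y p := lt_of_lt_of_le hdy hyp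
    have tri1 : dist x p ≤ t + dist y p := dist_triangle x y p
    have tri2 : dist y p ≤ t + dist x p := by
      calc dist y p ≤ dist y x + dist x p := dist_triangle _ _ _
      _ = t + dist x p := by rw [dist_comm y x]
    have hMM : dx * dy ≤ M * M := mul_le_mul hMx hMy hdy.le hMpos.le
    have hMd1 : dx * dy ≤ M * dist y p :=
      mul_le_mul hMx hyp hdy.le hMpos.le
    have hMd2 : dx * dy ≤ M * dist x p := by
      calc dx * dy = dy * dx := by ring
      _ ≤ M * dist x p := mul_le_mul hMy hxp hdx.le hMpos.le
    have h1 : dist x p / dist y p ≤ (t + M) ^ 2 / (dx * dy) := by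
      rw [div_le_div_iff₀ hyp0 (by positivity)]
      nlinarith [mul_le_mul_of_nonneg_left hMd1 ht0,
        mul_le_mul_of_nonneg_left hMM hyp0.le, sq_nonneg t, mul_nonneg ht0 ht0]
    have h2 : dist y p / dist x p ≤ (t + M) ^ 2 / (dx * dy) := by
      rw [div_le_div_iff₀ hxp0 (by positivity)]
      nlinarith [mul_le_mul_of_nonneg_left hMd2 ht0,
        mul_le_mul_of_nonneg_left hMM hxp0.le, sq_nonneg t, mul_nonneg ht0 ht0]
    have hA : Real.log (dist x p / dist y p) ≤ Real.log ((t + M) ^ 2 / (dx * dy)) :=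
      Real.log_le_log (by positivity) h1
    have hB : Real.log (dist y p / dist x p) ≤ Real.log ((t + M) ^ 2 / (dx * dy)) :=
      Real.log_le_log (by positivity) h2
    rw [abs_le, hU]
    constructor
    · rw [Real.log_div hxp0.ne' hyp0.ne']
      rw [Real.log_div hyp0.ne' hxp0.ne'] at hB
      linarith
    · exact hA
  refine ⟨ciSup_le key, ?_⟩
  -- second inequality
  have hbdd : BddAbove (Set.range fun p : frontier D =>
      |Real.log (dist x (p : EuclideanSpace ℝ (Fin n)) / dist y (p : EuclideanSpace ℝ (Fin n)))|) :=
    ⟨2 * Real.log ((t + M) / Real.sqrt (dx * dy)), by rintro v ⟨p, rfl⟩; exact key p⟩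
  obtain ⟨p, hp, hpd0⟩ := hFc.exists_infDist_eq_dist hFne x
  obtain ⟨q, hq, hqd0⟩ := hFc.exists_infDist_eq_dist hFne y
  have hpd : dx = dist x p := by rw [hdxdef]; exact hpd0
  have hqd : dy = dist y q := by rw [hdydef]; exact hqd0
  set Eta := ⨆ p : frontier D,
      |Real.log (dist x (p : EuclideanSpace ℝ (Fin n)) / dist y (p : EuclideanSpace ℝ (Fin n)))|
    with hEta
  have hple : |Real.log (dist x p / dist y p)| ≤ Eta := le_ciSup hbdd ⟨p, hp⟩
  have hqle : |Real.log (dist x q / dist y q)| ≤ Eta := le_ciSup hbdd ⟨q, hq⟩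
  have hEta0 : 0 ≤ Eta := le_trans (abs_nonneg _) hple
  set E := Real.exp Eta with hE
  have hE1 : 1 ≤ E := by
    rw [hE, ← Real.exp_zero]; exact Real.exp_le_exp.mpr hEta0
  have hxp0 : 0 < dist x p := by rw [← hpd]; exact hdx
  have hyq0 : 0 < dist y q := by rw [← hqd]; exact hdy
  have hyp : dy ≤ dist y p := infDist_le_dist_of_mem hp
  have hxq : dx ≤ dist x q := infDist_le_dist_of_mem hq
  have hyp0 : 0 < dist y p := lt_of_lt_of_le hdy hyp
  have hxq0 : 0 < dist x q := lt_of_lt_of_le hdx hxq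
  -- dist y p ≤ E * dx
  have h3 : dist y p ≤ E * dx := by
    have h := (abs_le.mp hple).1
    rw [Real.log_div hxp0.ne' hyp0.ne'] at h
    have hlog : Real.log (dist y p) ≤ Real.log (E * dx) := by
      rw [Real.log_mul (by positivity) hdx.ne', hE, Real.log_exp, hpd]
      linarith
    exact (Real.log_le_log_iff hyp0 (by positivity)).mp hlog
  have h3' : dist x q ≤ E * dy := by
    have h := (abs_le.mp hqle).2
    rw [Real.log_div hxq0.ne' hyq0.ne'] at h
    have hlog : Real.log (dist x q) ≤ Real.log (E * dy) := by
      rw [Real.log_mul (by positivity) hdy.ne', hE, Real.log_exp, hqd]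
      linarith
    exact (Real.log_le_log_iff hxq0 (by positivity)).mp hlog
  have h4 : dy ≤ E * dx := le_trans hyp h3
  have h4' : dx ≤ E * dy := le_trans hxq h3'
  have h5 : t ≤ dx + E * dx := by
    calc t ≤ dist x p + dist p y := dist_triangle x p y
    _ = dist x p + dist y p := by rw [dist_comm p y]
    _ ≤ dx + E * dx := by rw [← hpd]; linarith
  have h5' : t ≤ dy + E * dy := by
    calc t ≤ dist x q + dist q y := dist_triangle x q y
    _ = dist x q + dist y q := by rw [dist_comm q y]
    _ ≤ E * dy + dy := by rw [← hqd]; linarith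
    _ = dy + E * dy := by ring
  have hfin : (t + M) / Real.sqrt (dx * dy) ≤ (2 + E) ^ 2 := by
    rw [div_le_iff₀ hSpos]
    rcases le_total dx dy with hc | hc
    · have hSx : dx ≤ Real.sqrt (dx * dy) := by
        rw [show dx * dy = dx ^ 2 * (dy / dx) by field_simp, Real.sqrt_mul (by positivity),
          Real.sqrt_sq hdx.le]
        nlinarith [Real.one_le_sqrt.mpr ((one_le_div hdx).mpr hc)]
      have hMeq : M = dy := max_eq_right hc
      rw [hMeq]
      nlinarith [mul_le_mul_of_nonneg_left hSx (by positivity : (0:ℝ) ≤ 1 + 2 * E),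
        mul_nonneg (by nlinarith : (0:ℝ) ≤ 3 + 2 * E + E ^ 2) hSpos.le]
    · have hSy : dy ≤ Real.sqrt (dx * dy) := by
        rw [show dx * dy = dy ^ 2 * (dx / dy) by field_simp, Real.sqrt_mul (by positivity),
          Real.sqrt_sq hdy.le]
        nlinarith [Real.one_le_sqrt.mpr ((one_le_div hdy).mpr hc)]
      have hMeq : M = dx := max_eq_left hc
      rw [hMeq]
      nlinarith [mul_le_mul_of_nonneg_left hSy (by positivity : (0:ℝ) ≤ 1 + 2 * E),
        mul_nonneg (by nlinarith : (0:ℝ) ≤ 3 + 2 * E + E ^ 2) hSpos.le]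
  have hlog2 : Real.log ((t + M) / Real.sqrt (dx * dy)) ≤ Real.log ((2 + E) ^ 2) :=
    Real.log_le_log (by positivity) hfin
  have : Real.log ((2 + E) ^ 2) = 2 * Real.log (2 + E) := by
    rw [Real.log_pow]; push_cast; ring
  linarith
end
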